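/- arXiv:2201.04423 — 6 statements merged into one kernel-verified Lean document; each statement's English description precedes it below -/
import Mathlib

section
/- Let D be a totally ordered integral domain, B a boolean algebra, and D[B]* the boolean power with its f-algebra ordering. Then for f, g ∈ D[B]* and a ∈ D: (f ∧ g)(a) = ⋁{f(b) ∧ g(c) : min(b,c) = a} and (f ∨ g)(a) = ⋁{f(b) ∧ g(c) : max(b,c) = a}. -/
open Finset

/-- A `D`-algebra `S` is torsion-free as a `D`-module. -/
def SpTorsionFree (D S : Type*) [CommRing D] [CommRing S] [Algebra D S] : Prop :=
  ∀ (a : D) (s : S), a • s = 0 → a = 0 ∨ s = 0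

/-- `S` is generated as a `D`-algebra by its idempotents. -/
def SpIdemGenerated (D S : Type*) [CommRing D] [CommRing S] [Algebra D S] : Prop :=
  Algebra.adjoin D {e : S | IsIdempotentElem e} = ⊤

/-- A Specker `D`-algebra: commutative unital, torsion-free, idempotent-generated. -/
def IsSpecker (D S : Type*) [CommRing D] [CommRing S] [Algebra D S] : Prop :=
  SpTorsionFree D S ∧ SpIdemGenerated D S

/-- The idempotents of `S`. -/
abbrev IdemOf (S : Type*) [Monoid S] := {e : S // IsIdempotentElem e}

/-- A full orthogonal decomposition of `s` with pairwise distinct coefficients and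
nonzero pairwise orthogonal idempotents summing (= joining) to `1`. -/
def FullOrthDecomp (D S : Type*) [CommRing D] [CommRing S] [Algebra D S] {n : ℕ}
    (a : Fin n → D) (e : Fin n → S) (s : S) : Prop :=
  Function.Injective a ∧ (∀ i, IsIdempotentElem (e i)) ∧ (∀ i, e i ≠ 0) ∧
    (∀ i j, i ≠ j → e i * e j = 0) ∧ (∑ i, e i = 1) ∧ s = ∑ i, a i • e i

/-- `s` has an orthogonal decomposition with nonnegative coefficients. -/
def OrthNonnegDecomp (D S : Type*) [CommRing D] [LinearOrder D] [IsStrictOrderedRing D] [CommRing S] [Algebra D S]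
    (s : S) : Prop :=
  ∃ (n : ℕ) (a : Fin n → D) (e : Fin n → S),
    (∀ i, 0 ≤ a i) ∧ (∀ i, IsIdempotentElem (e i)) ∧
    (∀ i j, i ≠ j → e i * e j = 0) ∧ s = ∑ i, a i • e i

/-- The canonical f-algebra order relation on a Specker algebra. -/
def specLE (D S : Type*) [CommRing D] [LinearOrder D] [IsStrictOrderedRing D] [CommRing S] [Algebra D S]
    (s t : S) : Prop :=
  OrthNonnegDecomp D S (t - s)

section Rel
variable {S : Type*}
def relUB (le : S → S → Prop) (A : Set S) (u : S) : Prop := ∀ x ∈ A, le x u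
def relLB (le : S → S → Prop) (A : Set S) (u : S) : Prop := ∀ x ∈ A, le u x
def relIsLUB (le : S → S → Prop) (A : Set S) (u : S) : Prop :=
  relUB le A u ∧ ∀ v, relUB le A v → le u v
def relIsGLB (le : S → S → Prop) (A : Set S) (u : S) : Prop :=
  relLB le A u ∧ ∀ v, relLB le A v → le v u
end Rel

/-- A function `D → B` belonging to Foster's boolean power `D[B]*`:
finitely valued, pairwise disjoint values, values join to `⊤`. -/
def IsBPFn (D B : Type*) [CommRing D] [BooleanAlgebra B] (f : D → B) : Prop :=
  (Set.range f).Finite ∧ (∀ a b : D, a ≠ b → f a ⊓ f b = ⊥) ∧ IsLUB (Set.range f) ⊤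

/-- Foster's boolean power `D[B]*` as a set of functions. -/
def DBStar (D B : Type*) [CommRing D] [BooleanAlgebra B] : Type _ :=
  {f : D → B // IsBPFn D B f}

/-- The boolean-power `D`-algebra operations on `D[B]*`, characterized via least upper bounds. -/
def FosterOps (D B : Type*) [CommRing D] [BooleanAlgebra B]
    [CommRing (DBStar D B)] [Algebra D (DBStar D B)] : Prop :=
  (∀ f g : DBStar D B, ∀ a : D,
      IsLUB {x : B | ∃ b c : D, b + c = a ∧ x = f.1 b ⊓ g.1 c} ((f + g).1 a)) ∧
  (∀ f g : DBStar D B, ∀ a : D,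
      IsLUB {x : B | ∃ b c : D, b * c = a ∧ x = f.1 b ⊓ g.1 c} ((f * g).1 a)) ∧
  (∀ (b : D) (f : DBStar D B) (a : D),
      IsLUB {x : B | ∃ c : D, b * c = a ∧ x = f.1 c} ((b • f).1 a))

/-- Decreasing step functions `D → B` determined by a chain `1 = e₀ > e₁ > ⋯ > eₙ > 0`
and thresholds `a₀ < a₁ < ⋯ < aₙ`. -/
def IsFlatFn (D B : Type*) [CommRing D] [LinearOrder D] [IsStrictOrderedRing D] [BooleanAlgebra B] (f : D → B) : Prop :=
  ∃ (n : ℕ) (a : Fin (n + 1) → D) (e : Fin (n + 1) → B),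
    StrictMono a ∧ StrictAnti e ∧ e 0 = ⊤ ∧ ⊥ < e (Fin.last n) ∧
    (∀ x : D, x ≤ a 0 → f x = ⊤) ∧
    (∀ (i : Fin n) (x : D), a i.castSucc < x → x ≤ a i.succ → f x = e i.succ) ∧
    (∀ x : D, a (Fin.last n) < x → f x = ⊥)

/-- The de Vries power `D[B]♭` as a set of decreasing step functions. -/
def DBFlat (D B : Type*) [CommRing D] [LinearOrder D] [IsStrictOrderedRing D] [BooleanAlgebra B] : Type _ :=
  {f : D → B // IsFlatFn D B f}

/-- A proximity on a torsion-free f-algebra over `D` (axioms (P1)–(P10)). -/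
def IsProximity (D S : Type*) [CommRing D] [LinearOrder D] [IsStrictOrderedRing D] [CommRing S] [Algebra D S]
    [Lattice S] (r : S → S → Prop) : Prop :=
  (r 0 0 ∧ r 1 1) ∧
  (∀ s t : S, r s t → s ≤ t) ∧
  (∀ s t u v : S, s ≤ t → r t u → u ≤ v → r s v) ∧
  (∀ s t u : S, r s t → r s u → r s (t ⊓ u)) ∧
  (∀ s t : S, r s t → r (-t) (-s)) ∧
  (∀ s t u v : S, r s t → r u v → r (s + u) (t + v)) ∧
  (∀ (s t : S) (a : D), 0 < a → r s t → r (a • s) (a • t)) ∧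
  (∀ s t : S, (∃ a : D, 0 < a ∧ r (a • s) (a • t)) → r s t) ∧
  (∀ s t u v : S, 0 ≤ s → 0 ≤ t → 0 ≤ u → 0 ≤ v → r s t → r u v → r (s * u) (t * v)) ∧
  (∀ s t : S, r s t → ∃ u, r s u ∧ r u t) ∧
  (∀ s : S, 0 < s → ∃ t, 0 < t ∧ r t s)

/-- A de Vries proximity on a boolean algebra. -/
def IsDeVriesProx (B : Type*) [BooleanAlgebra B] (p : B → B → Prop) : Prop :=
  (p ⊥ ⊥ ∧ p ⊤ ⊤) ∧
  (∀ a b : B, p a b → a ≤ b) ∧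
  (∀ a b c d : B, a ≤ b → p b c → c ≤ d → p a d) ∧
  (∀ a b c : B, p a b → p a c → p a (b ⊓ c)) ∧
  (∀ a b : B, p a b → p bᶜ aᶜ) ∧
  (∀ a b : B, p a b → ∃ c, p a c ∧ p c b) ∧
  (∀ a : B, a ≠ ⊥ → ∃ b, b ≠ ⊥ ∧ p b a)

/-- A Baer ring: the annihilator of every ideal is generated by an idempotent. -/
def IsBaer (S : Type*) [CommRing S] : Prop :=
  ∀ I : Ideal S, ∃ e : S, IsIdempotentElem e ∧
    ∀ r : S, (∀ s ∈ I, r * s = 0) ↔ ∃ x : S, r = x * e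

/-- Proximity morphisms between proximity (Baer-)Specker algebras (axioms (M1)–(M7)). -/
def IsProxMorphism (D S T : Type*) [CommRing D] [LinearOrder D] [IsStrictOrderedRing D]
    [CommRing S] [Algebra D S] [CommRing T] [Algebra D T] [Lattice S] [Lattice T]
    (rS : S → S → Prop) (rT : T → T → Prop) (α : S → T) : Prop :=
  α 0 = 0 ∧
  (∀ s t : S, α (s ⊓ t) = α s ⊓ α t) ∧
  (∀ s t : S, rS s t → rT (-(α (-s))) (α t)) ∧
  (∀ t : S, IsLUB {x : T | ∃ s : S, rS s t ∧ x = α s} (α t)) ∧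
  (∀ (s : S) (a : D), α (s + algebraMap D S a) = α s + algebraMap D T a) ∧
  (∀ (s : S) (a : D), 0 ≤ a → α (a • s) = a • α s) ∧
  (∀ (s : S) (a : D), α (s ⊔ algebraMap D S a) = α s ⊔ algebraMap D T a)

section Aux
variable {D B : Type*} [CommRing D] [LinearOrder D] [IsStrictOrderedRing D] [BooleanAlgebra B]

lemma isLUB_finite_sup {A : Set B} (hA : A.Finite) : IsLUB A (hA.toFinset.sup id) := by
  constructor
  · intro x hx
    exact Finset.le_sup (f := id) (hA.mem_toFinset.2 hx)
  · intro u hu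
    exact Finset.sup_le fun x hx => hu (hA.mem_toFinset.1 hx)

lemma isLUB_bot_of_all_bot {A : Set B} (h : ∀ x ∈ A, x = ⊥) : IsLUB A (⊥ : B) :=
  ⟨fun x hx => (h x hx).le, fun u _ => bot_le⟩

lemma inf_eq_bot_iff_le_compl' {a b : B} : a ⊓ b = ⊥ ↔ a ≤ bᶜ := by
  rw [← disjoint_iff, le_compl_iff_disjoint_right]

lemma DBStar.ext' {p q : DBStar D B} (h : ∀ x, p.1 x = q.1 x) : p = q :=
  Subtype.ext (funext h)

def chiFn (D : Type*) [CommRing D] [LinearOrder D] [IsStrictOrderedRing D] {B : Type*} [BooleanAlgebra B] (b : B) :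
    D → B := fun x => if x = 1 then b else if x = 0 then bᶜ else ⊥

lemma chiFn_one (b : B) : chiFn D b 1 = b := by simp [chiFn]

lemma chiFn_zero (b : B) : chiFn D b 0 = bᶜ := by simp [chiFn]

lemma chiFn_other (b : B) {x : D} (h0 : x ≠ 0) (h1 : x ≠ 1) : chiFn D b x = ⊥ := by
  simp [chiFn, h0, h1]

lemma chiFn_isBPFn (b : B) : IsBPFn D B (chiFn D b) := by
  refine ⟨?_, ?_, ?_⟩
  · refine Set.Finite.subset (((Set.finite_singleton ⊥).insert bᶜ).insert b) ?_
    rintro x ⟨y, rfl⟩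
    unfold chiFn
    split_ifs <;> simp
  · intro x y hxy
    unfold chiFn
    split_ifs <;> simp_all
  · refine ⟨fun x _ => le_top, fun u hu => ?_⟩
    have h1 : b ≤ u := hu ⟨1, chiFn_one b⟩
    have h2 : bᶜ ≤ u := hu ⟨0, chiFn_zero b⟩
    calc (⊤ : B) = b ⊔ bᶜ := (sup_compl_eq_top).symm
    _ ≤ u := sup_le h1 h2

def chi (D : Type*) [CommRing D] [LinearOrder D] [IsStrictOrderedRing D] {B : Type*} [BooleanAlgebra B]
    [CommRing (DBStar D B)] [Algebra D (DBStar D B)] (b : B) : DBStar D B :=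
  ⟨chiFn D b, chiFn_isBPFn b⟩

lemma chi_apply [CommRing (DBStar D B)] [Algebra D (DBStar D B)] (b : B) (x : D) :
    (chi D b : DBStar D B).1 x = chiFn D b x := rfl

variable [CommRing (DBStar D B)] [Algebra D (DBStar D B)] (hF : FosterOps D B)
include hF

lemma zero_apply' (a : D) : (0 : DBStar D B).1 a = if a = 0 then ⊤ else ⊥ := by
  have h := hF.2.2 (0 : D) (0 : DBStar D B) a
  rw [zero_smul] at h
  split_ifs with ha
  · subst ha
    refine h.unique ?_
    have h0 := (0 : DBStar D B).2.2.2
    convert h0 using 1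
    ext x
    simp [Set.mem_range, eq_comm]
  · refine h.unique ?_
    convert isLUB_empty (α := B)
    ext x
    simp only [Set.mem_setOf_eq, Set.mem_empty_iff_false, iff_false]
    rintro ⟨c, hc, rfl⟩
    rw [zero_mul] at hc
    exact ha hc.symm

lemma neg_apply' (h : DBStar D B) (a : D) : (-h).1 a = h.1 (-a) := by
  have hs := hF.2.2 (-1 : D) h a
  rw [neg_one_smul] at hs
  refine hs.unique ?_
  constructor
  · rintro x ⟨c, hc, rfl⟩
    have : c = -a := by linarith
    rw [this]
  · intro u hu
    exact hu ⟨-a, by ring, rfl⟩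

lemma sub_isLUB (p q : DBStar D B) (a : D) :
    IsLUB {x : B | ∃ b c : D, b - c = a ∧ x = p.1 b ⊓ q.1 c} ((p - q).1 a) := by
  have h := hF.1 p (-q) a
  rw [sub_eq_add_neg]
  convert h using 2
  ext x
  constructor
  · rintro ⟨b, c, hbc, rfl⟩
    exact ⟨b, -c, by linarith, by rw [neg_apply' hF, neg_neg]⟩
  · rintro ⟨b, c, hbc, rfl⟩
    exact ⟨b, -c, by linarith, by rw [neg_apply' hF]⟩


lemma idem_apply_bot {e : DBStar D B} (he : IsIdempotentElem e) {x : D}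
    (h0 : x ≠ 0) (h1 : x ≠ 1) : e.1 x = ⊥ := by
  have hm := hF.2.1 e e (x * x)
  rw [he] at hm
  have hle : e.1 x ≤ e.1 (x * x) := hm.1 ⟨x, x, rfl, (inf_idem _).symm⟩
  have hne : x * x ≠ x := by
    intro h
    have hz : x * (x - 1) = 0 := by rw [mul_sub, mul_one, h, sub_self]
    rcases mul_eq_zero.mp hz with h' | h'
    · exact h0 h'
    · exact h1 (by linarith)
  have hd := e.2.2.1 x (x * x) (fun h => hne h.symm)
  rw [inf_eq_left.2 hle] at hd
  exact hd


lemma smul_chi_apply {a : D} (ha : a ≠ 0) (b : B) (x : D) :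
    (a • chi D b : DBStar D B).1 x = if x = a then b else if x = 0 then bᶜ else ⊥ := by
  refine (hF.2.2 a (chi D b) x).unique ?_
  constructor
  · rintro y ⟨c, hc, rfl⟩
    show chiFn D b c ≤ _
    by_cases hc1 : c = 1
    · subst hc1
      rw [mul_one] at hc
      rw [chiFn_one, if_pos hc.symm]
    by_cases hc0 : c = 0
    · subst hc0
      rw [mul_zero] at hc
      rw [chiFn_zero, if_neg (by rw [← hc]; exact fun h => ha h.symm), if_pos hc.symm]
    · rw [chiFn_other b hc0 hc1]
      exact bot_le
  · intro u hu
    split_ifs with h1 h2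
    · exact hu ⟨1, by rw [mul_one, h1], (chiFn_one b).symm⟩
    · exact hu ⟨0, by rw [mul_zero, h2], (chiFn_zero b).symm⟩
    · exact bot_le


lemma chi_mul_chi (b c : B) : (chi D b * chi D c : DBStar D B) = chi D (b ⊓ c) := by
  refine DBStar.ext' fun x => ?_
  refine ((hF.2.1 (chi D b) (chi D c) x).unique ?_)
  rw [chi_apply]
  constructor
  · rintro y ⟨u, v, huv, rfl⟩
    rw [chi_apply, chi_apply]
    by_cases hu1 : u = 1
    · subst hu1
      rw [chiFn_one]
      by_cases hv1 : v = 1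
      · subst hv1
        rw [one_mul] at huv
        rw [chiFn_one, ← huv, chiFn_one]
      by_cases hv0 : v = 0
      · subst hv0
        rw [mul_zero] at huv
        rw [chiFn_zero, ← huv, chiFn_zero, compl_inf]
        exact le_trans inf_le_right le_sup_right
      · rw [chiFn_other _ hv0 hv1, inf_bot_eq]
        exact bot_le
    by_cases hu0 : u = 0
    · subst hu0
      rw [chiFn_zero]
      by_cases hv1 : v = 1
      · subst hv1
        rw [mul_one] at huv
        rw [chiFn_one, ← huv, chiFn_zero, compl_inf]
        exact le_trans inf_le_left le_sup_left
      by_cases hv0 : v = 0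
      · subst hv0
        rw [mul_zero] at huv
        rw [chiFn_zero, ← huv, chiFn_zero, compl_inf]
        exact le_trans inf_le_left le_sup_left
      · rw [chiFn_other _ hv0 hv1, inf_bot_eq]
        exact bot_le
    · rw [chiFn_other _ hu0 hu1, bot_inf_eq]
      exact bot_le
  · intro w hw
    by_cases hx1 : x = 1
    · subst hx1
      rw [chiFn_one]
      have := hw ⟨1, 1, mul_one 1, rfl⟩
      rw [chi_apply, chi_apply, chiFn_one, chiFn_one] at this
      exact this
    by_cases hx0 : x = 0
    · subst hx0
      have h00 := hw ⟨0, 0, mul_zero 0, rfl⟩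
      rw [chi_apply, chi_apply, chiFn_zero, chiFn_zero] at h00
      have h01 := hw ⟨0, 1, zero_mul 1, rfl⟩
      rw [chi_apply, chi_apply, chiFn_zero, chiFn_one] at h01
      have h10 := hw ⟨1, 0, one_mul 0, rfl⟩
      rw [chi_apply, chi_apply, chiFn_one, chiFn_zero] at h10
      have hbc : bᶜ ≤ w := by
        rw [← inf_top_eq bᶜ, ← sup_compl_eq_top (x := c), inf_sup_left]
        exact sup_le h01 h00
      have hcc : cᶜ ≤ w := by
        rw [← inf_top_eq cᶜ, ← sup_compl_eq_top (x := b), inf_sup_left]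
        exact sup_le (by rw [inf_comm]; exact h10) (by rw [inf_comm]; exact h00)
      rw [chiFn_zero, compl_inf]
      exact sup_le hbc hcc
    · rw [chiFn_other _ hx0 hx1]
      exact bot_le

lemma chi_idem (b : B) : IsIdempotentElem (chi D b : DBStar D B) := by
  show chi D b * chi D b = chi D b
  rw [chi_mul_chi hF, inf_idem]

lemma chi_bot_eq_zero : (chi D (⊥ : B) : DBStar D B) = 0 := by
  refine DBStar.ext' fun x => ?_
  rw [chi_apply, zero_apply' hF]
  by_cases h1 : x = 1
  · subst h1
    rw [chiFn_one, if_neg one_ne_zero]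
  by_cases h0 : x = 0
  · subst h0
    rw [chiFn_zero, compl_bot, if_pos rfl]
  · rw [chiFn_other _ h0 h1, if_neg h0]

lemma chi_orth {b c : B} (hbc : b ⊓ c = ⊥) :
    (chi D b * chi D c : DBStar D B) = 0 := by
  rw [chi_mul_chi hF, hbc, chi_bot_eq_zero hF]


lemma sum_smul_chi_apply {n : ℕ} (a : Fin n → D) (b : Fin n → B)
    (ha : ∀ i, a i ≠ 0) (hb : ∀ i j, i ≠ j → b i ⊓ b j = ⊥) (s : Finset (Fin n)) :
    ∀ x : D, (∑ i ∈ s, a i • chi D (b i) : DBStar D B).1 x =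
      if x = 0 then (s.sup b)ᶜ else ((s.filter fun i => a i = x).sup b) := by
  classical
  induction s using Finset.induction with
  | empty =>
    intro x
    rw [Finset.sum_empty, zero_apply' hF]
    by_cases hx : x = 0 <;> simp [hx]
  | @insert i t hi ih =>
    intro x
    rw [Finset.sum_insert hi]
    have hdisj : b i ⊓ t.sup b = ⊥ := by
      rw [Finset.sup_inf_distrib_left]
      refine le_bot_iff.1 (Finset.sup_le fun j hj => ?_)
      exact (hb i j (fun h => hi (h ▸ hj))).le
    refine (hF.1 (a i • chi D (b i)) (∑ j ∈ t, a j • chi D (b j)) x).unique ?_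
    constructor
    · rintro y ⟨u, v, huv, rfl⟩
      rw [smul_chi_apply hF (ha i), ih v]
      by_cases hu : u = a i
      · rw [if_pos hu]
        by_cases hv : v = 0
        · rw [if_pos hv]
          have hx : x = a i := by rw [← huv, hu, hv, add_zero]
          rw [if_neg (hx ▸ ha i)]
          refine le_trans inf_le_left (Finset.le_sup ?_)
          exact Finset.mem_filter.2 ⟨Finset.mem_insert_self i t, hx.symm⟩
        · rw [if_neg hv]
          have hz : b i ⊓ (t.filter fun j => a j = v).sup b = ⊥ :=
            le_bot_iff.1 (le_trans
              (inf_le_inf_left _ (Finset.sup_mono (Finset.filter_subset _ _))) hdisj.le)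
          rw [hz]
          exact bot_le
      · rw [if_neg hu]
        by_cases hu0 : u = 0
        · rw [if_pos hu0]
          have hx : x = v := by rw [← huv, hu0, zero_add]
          rw [hx]
          by_cases hv : v = 0
          · rw [if_pos hv, if_pos hv, Finset.sup_insert, compl_sup]
          · rw [if_neg hv, if_neg hv]
            refine le_trans inf_le_right (Finset.sup_mono ?_)
            exact Finset.filter_subset_filter _ (Finset.subset_insert i t)
        · rw [if_neg hu0, bot_inf_eq]
          exact bot_le
    · intro w hw
      by_cases hx : x = 0
      · subst hx
        rw [if_pos rfl, Finset.sup_insert, compl_sup]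
        have h00 := hw ⟨0, 0, add_zero 0, rfl⟩
        rw [smul_chi_apply hF (ha i), ih 0,
          if_neg (fun h : (0 : D) = a i => ha i h.symm), if_pos rfl, if_pos rfl] at h00
        exact h00
      · rw [if_neg hx]
        refine Finset.sup_le fun j hj => ?_
        rcases Finset.mem_filter.1 hj with ⟨hjmem, hjx⟩
        rcases Finset.mem_insert.1 hjmem with rfl | hjt
        · have hkey := hw ⟨a j, 0, by rw [add_zero, hjx], rfl⟩
          rw [smul_chi_apply hF (ha j), ih 0, if_pos rfl, if_pos rfl] at hkey
          have hle : b j ≤ (t.sup b)ᶜ := inf_eq_bot_iff_le_compl'.1 hdisj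
          calc b j = b j ⊓ (t.sup b)ᶜ := (inf_eq_left.2 hle).symm
          _ ≤ w := hkey
        · have hkey := hw ⟨0, x, zero_add x, rfl⟩
          rw [smul_chi_apply hF (ha i), ih x,
            if_neg (fun h : (0 : D) = a i => ha i h.symm), if_pos rfl, if_neg hx] at hkey
          refine le_trans (le_inf ?_ (Finset.le_sup (Finset.mem_filter.2 ⟨hjt, hjx⟩))) hkey
          exact inf_eq_bot_iff_le_compl'.1 (hb j i (fun h => hi (h ▸ hjt)))


lemma orthNonneg_neg_bot {h : DBStar D B}
    (hd : OrthNonnegDecomp D (DBStar D B) h) : ∀ x : D, x < 0 → h.1 x = ⊥ := by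
  obtain ⟨n, a, e, ha, he, -, hsum⟩ := hd
  rw [hsum]
  have key : ∀ s : Finset (Fin n), ∀ x : D, x < 0 →
      (∑ i ∈ s, a i • e i : DBStar D B).1 x = ⊥ := by
    intro s
    induction s using Finset.induction with
    | empty =>
      intro x hx
      rw [Finset.sum_empty, zero_apply' hF, if_neg (ne_of_lt hx)]
    | @insert i t hi ih =>
      intro x hx
      rw [Finset.sum_insert hi]
      refine (hF.1 (a i • e i) (∑ j ∈ t, a j • e j) x).unique (isLUB_bot_of_all_bot ?_)
      rintro y ⟨u, v, huv, rfl⟩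
      rcases lt_or_ge u 0 with hu | hu
      · have hz : (a i • e i).1 u = ⊥ := by
          refine (hF.2.2 (a i) (e i) u).unique (isLUB_bot_of_all_bot ?_)
          rintro z ⟨cc, hcc, rfl⟩
          have hc0 : cc ≠ 0 := by
            rintro rfl
            rw [mul_zero] at hcc
            exact absurd hcc (ne_of_lt hu).symm
          have hc1 : cc ≠ 1 := by
            rintro rfl
            rw [mul_one] at hcc
            subst hcc
            exact absurd (ha i) (not_le.2 hu)
          exact idem_apply_bot hF (he i) hc0 hc1
        rw [hz, bot_inf_eq]
      · have hv : v < 0 := by linarith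
        rw [ih v hv, inf_bot_eq]
  exact key Finset.univ

lemma neg_bot_orthNonneg {h : DBStar D B} (hb : ∀ x : D, x < 0 → h.1 x = ⊥) :
    OrthNonnegDecomp D (DBStar D B) h := by
  classical
  have hinj : Set.InjOn h.1 {t : D | h.1 t ≠ ⊥} := by
    intro t ht t' ht' he
    by_contra hne
    have hd := h.2.2.1 t t' hne
    rw [he, inf_idem] at hd
    exact ht' hd
  have hfin : {t : D | h.1 t ≠ ⊥ ∧ t ≠ 0}.Finite := by
    have h1 : {t : D | h.1 t ≠ ⊥}.Finite :=
      Set.Finite.of_finite_image (h.2.1.subset (Set.image_subset_range _ _)) hinj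
    exact h1.subset fun t ht => ht.1
  set A := hfin.toFinset with hA
  have hmemA : ∀ t : D, t ∈ A ↔ (h.1 t ≠ ⊥ ∧ t ≠ 0) := fun t => hfin.mem_toFinset
  let E := A.equivFin
  set av : Fin A.card → D := fun i => (E.symm i : D) with hav
  set bv : Fin A.card → B := fun i => h.1 (av i) with hbv
  have havA : ∀ i, av i ∈ A := fun i => (E.symm i).2
  have hane : ∀ i, av i ≠ 0 := fun i => ((hmemA _).1 (havA i)).2
  have havinj : Function.Injective av := by
    intro i j hij
    exact E.symm.injective (Subtype.ext hij)
  have hborth : ∀ i j, i ≠ j → bv i ⊓ bv j = ⊥ := by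
    intro i j hij
    exact h.2.2.1 _ _ (fun hh => hij (havinj hh))
  refine ⟨A.card, av, fun i => chi D (bv i), ?_, fun i => chi_idem hF _, ?_, ?_⟩
  · intro i
    by_contra hneg
    push_neg at hneg
    exact ((hmemA _).1 (havA i)).1 (hb _ hneg)
  · intro i j hij
    exact chi_orth hF (hborth i j hij)
  · refine DBStar.ext' fun x => ?_
    rw [sum_smul_chi_apply hF av bv hane hborth Finset.univ x]
    by_cases hx : x = 0
    · subst hx
      rw [if_pos rfl]
      have hdisj : Finset.univ.sup bv ⊓ h.1 0 = ⊥ := by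
        rw [Finset.sup_inf_distrib_right]
        refine le_bot_iff.1 (Finset.sup_le fun i _ => ?_)
        exact (h.2.2.1 _ _ (hane i)).le
      have hcodis : Finset.univ.sup bv ⊔ h.1 0 = ⊤ := by
        refine le_antisymm le_top ?_
        refine h.2.2.2.2 ?_
        rintro y ⟨t, rfl⟩
        by_cases ht0 : t = 0
        · subst ht0
          exact le_sup_right
        by_cases htb : h.1 t = ⊥
        · rw [htb]
          exact bot_le
        · have htA : t ∈ A := (hmemA t).2 ⟨htb, ht0⟩
          have : h.1 t = bv (E ⟨t, htA⟩) := by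
            rw [hbv]
            simp only [hav, Equiv.symm_apply_apply]
          rw [this]
          exact le_trans (Finset.le_sup (Finset.mem_univ _)) le_sup_left
      exact (compl_unique hdisj hcodis).symm
    · rw [if_neg hx]
      refine le_antisymm ?_ (Finset.sup_le fun j hj => ?_)
      · by_cases htb : h.1 x = ⊥
        · rw [htb]
          exact bot_le
        · have htA : x ∈ A := (hmemA x).2 ⟨htb, hx⟩
          have hxx : h.1 x = bv (E ⟨x, htA⟩) := by
            rw [hbv]
            simp only [hav, Equiv.symm_apply_apply]
          rw [hxx]
          refine Finset.le_sup (Finset.mem_filter.2 ⟨Finset.mem_univ _, ?_⟩)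
          simp only [hav, Equiv.symm_apply_apply]
      · rcases Finset.mem_filter.1 hj with ⟨-, hjx⟩
        show h.1 (av j) ≤ h.1 x
        rw [hjx]


lemma exists_opElem (f g : DBStar D B) (op : D → D → D) :
    ∃ m : DBStar D B, ∀ a : D,
      IsLUB {x : B | ∃ b c : D, op b c = a ∧ x = f.1 b ⊓ g.1 c} (m.1 a) := by
  classical
  have hT : (Set.image2 (· ⊓ ·) (Set.range f.1) (Set.range g.1)).Finite :=
    Set.Finite.image2 _ f.2.1 g.2.1
  have hsub : ∀ a : D, {x : B | ∃ b c : D, op b c = a ∧ x = f.1 b ⊓ g.1 c} ⊆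
      Set.image2 (· ⊓ ·) (Set.range f.1) (Set.range g.1) := by
    rintro a x ⟨b, c, -, rfl⟩
    exact ⟨f.1 b, ⟨b, rfl⟩, g.1 c, ⟨c, rfl⟩, rfl⟩
  have hS : ∀ a : D, {x : B | ∃ b c : D, op b c = a ∧ x = f.1 b ⊓ g.1 c}.Finite :=
    fun a => hT.subset (hsub a)
  have hLUB : ∀ a, IsLUB {x : B | ∃ b c : D, op b c = a ∧ x = f.1 b ⊓ g.1 c}
      ((hS a).toFinset.sup id) := fun a => isLUB_finite_sup (hS a)
  refine ⟨⟨fun a => (hS a).toFinset.sup id, ?_, ?_, ?_⟩, hLUB⟩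
  · refine Set.Finite.subset (Set.Finite.image (fun t : Finset B => t.sup id)
      (hT.toFinset.powerset : Finset (Finset B)).finite_toSet) ?_
    rintro x ⟨a, rfl⟩
    refine ⟨(hS a).toFinset, Finset.mem_coe.2 (Finset.mem_powerset.2 fun y hy =>
      hT.mem_toFinset.2 (hsub a ((hS a).mem_toFinset.1 hy))), rfl⟩
  · intro a a' haa'
    rw [Finset.sup_inf_sup]
    refine le_bot_iff.1 (Finset.sup_le ?_)
    rintro ⟨x, y⟩ hxy
    rcases Finset.mem_product.1 hxy with ⟨hx, hy⟩
    obtain ⟨b, c, hbc, rfl⟩ := (hS a).mem_toFinset.1 hx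
    obtain ⟨b', c', hbc', rfl⟩ := (hS a').mem_toFinset.1 hy
    by_cases hbb : b = b'
    · by_cases hcc : c = c'
      · exfalso
        apply haa'
        rw [← hbc, ← hbc', hbb, hcc]
      · calc (id (f.1 b ⊓ g.1 c) : B) ⊓ id (f.1 b' ⊓ g.1 c') ≤ g.1 c ⊓ g.1 c' :=
            inf_le_inf inf_le_right inf_le_right
        _ = ⊥ := g.2.2.1 c c' hcc
    · calc (id (f.1 b ⊓ g.1 c) : B) ⊓ id (f.1 b' ⊓ g.1 c') ≤ f.1 b ⊓ f.1 b' :=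
          inf_le_inf inf_le_left inf_le_left
      _ = ⊥ := f.2.2.1 b b' hbb
  · refine ⟨fun x _ => le_top, fun u hu => ?_⟩
    have hf : (⊤ : B) = f.2.1.toFinset.sup id := (f.2.2.2).unique (isLUB_finite_sup f.2.1)
    have hg : (⊤ : B) = g.2.1.toFinset.sup id := (g.2.2.2).unique (isLUB_finite_sup g.2.1)
    have htop : (⊤ : B) = f.2.1.toFinset.sup id ⊓ g.2.1.toFinset.sup id := by
      rw [← hf, ← hg, top_inf_eq]
    rw [htop, Finset.sup_inf_sup]
    refine Finset.sup_le ?_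
    rintro ⟨x, y⟩ hxy
    rcases Finset.mem_product.1 hxy with ⟨hx, hy⟩
    obtain ⟨b, rfl⟩ := f.2.1.mem_toFinset.1 hx
    obtain ⟨c, rfl⟩ := g.2.1.mem_toFinset.1 hy
    exact le_trans ((hLUB (op b c)).1 ⟨b, c, rfl, rfl⟩) (hu ⟨op b c, rfl⟩)

end Aux

/-- the lattice meet and join in `D[B]*` (with respect to its f-algebra
order) are computed by `(f ∧ g)(a) = ⋁{f b ⊓ g c : min b c = a}` and
`(f ∨ g)(a) = ⋁{f b ⊓ g c : max b c = a}`. -/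
theorem statement8 (D B : Type*) [CommRing D] [LinearOrder D] [IsStrictOrderedRing D] [BooleanAlgebra B]
    [CommRing (DBStar D B)] [Algebra D (DBStar D B)] (hF : FosterOps D B)
    (f g : DBStar D B) :
    (∃ m : DBStar D B, relIsGLB (specLE D (DBStar D B)) {f, g} m ∧
      ∀ a : D, IsLUB {x : B | ∃ b c : D, min b c = a ∧ x = f.1 b ⊓ g.1 c} (m.1 a)) ∧
    (∃ j : DBStar D B, relIsLUB (specLE D (DBStar D B)) {f, g} j ∧
      ∀ a : D, IsLUB {x : B | ∃ b c : D, max b c = a ∧ x = f.1 b ⊓ g.1 c} (j.1 a)) := by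
  classical
  obtain ⟨m, hm⟩ := exists_opElem hF f g min
  obtain ⟨j, hj⟩ := exists_opElem hF f g max
  -- pointwise disjointness facts about m
  have keyfm : ∀ u v : D, u < v → m.1 v ≤ (f.1 u)ᶜ := by
    intro u v huv
    refine (hm v).2 fun y hy => ?_
    obtain ⟨b, c, hbc, rfl⟩ := hy
    rw [← inf_eq_bot_iff_le_compl']
    refine le_bot_iff.1 ?_
    have hbu : b ≠ u := by
      have hvb : v ≤ b := by rw [← hbc]; exact min_le_left b c
      intro h
      rw [h] at hvb
      linarith
    calc (f.1 b ⊓ g.1 c) ⊓ f.1 u ≤ f.1 b ⊓ f.1 u := inf_le_inf_right _ inf_le_left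
    _ = ⊥ := f.2.2.1 b u hbu
  have keygm : ∀ u v : D, u < v → m.1 v ≤ (g.1 u)ᶜ := by
    intro u v huv
    refine (hm v).2 fun y hy => ?_
    obtain ⟨b, c, hbc, rfl⟩ := hy
    rw [← inf_eq_bot_iff_le_compl']
    refine le_bot_iff.1 ?_
    have hbu : c ≠ u := by
      have hvb : v ≤ c := by rw [← hbc]; exact min_le_right b c
      intro h
      rw [h] at hvb
      linarith
    calc (f.1 b ⊓ g.1 c) ⊓ g.1 u ≤ g.1 c ⊓ g.1 u := inf_le_inf_right _ inf_le_right
    _ = ⊥ := g.2.2.1 c u hbu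
  have keyfj : ∀ u v : D, v < u → j.1 v ≤ (f.1 u)ᶜ := by
    intro u v huv
    refine (hj v).2 fun y hy => ?_
    obtain ⟨b, c, hbc, rfl⟩ := hy
    rw [← inf_eq_bot_iff_le_compl']
    refine le_bot_iff.1 ?_
    have hbu : b ≠ u := by
      have hvb : b ≤ v := by rw [← hbc]; exact le_max_left b c
      intro h
      rw [h] at hvb
      linarith
    calc (f.1 b ⊓ g.1 c) ⊓ f.1 u ≤ f.1 b ⊓ f.1 u := inf_le_inf_right _ inf_le_left
    _ = ⊥ := f.2.2.1 b u hbu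
  have keygj : ∀ u v : D, v < u → j.1 v ≤ (g.1 u)ᶜ := by
    intro u v huv
    refine (hj v).2 fun y hy => ?_
    obtain ⟨b, c, hbc, rfl⟩ := hy
    rw [← inf_eq_bot_iff_le_compl']
    refine le_bot_iff.1 ?_
    have hbu : c ≠ u := by
      have hvb : c ≤ v := by rw [← hbc]; exact le_max_right b c
      intro h
      rw [h] at hvb
      linarith
    calc (f.1 b ⊓ g.1 c) ⊓ g.1 u ≤ g.1 c ⊓ g.1 u := inf_le_inf_right _ inf_le_right
    _ = ⊥ := g.2.2.1 c u hbu
  constructor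
  · refine ⟨m, ⟨?_, ?_⟩, hm⟩
    · -- lower bound
      intro x hx
      simp only [Set.mem_insert_iff, Set.mem_singleton_iff] at hx
      rcases hx with rfl | rfl
      · show OrthNonnegDecomp D (DBStar D B) (x - m)
        refine neg_bot_orthNonneg hF ?_
        intro z hz
        refine (sub_isLUB hF x m z).unique (isLUB_bot_of_all_bot ?_)
        rintro y ⟨b, c, hbc, rfl⟩
        have hbc' : b < c := by linarith
        refine le_bot_iff.1 ?_
        calc x.1 b ⊓ m.1 c ≤ x.1 b ⊓ (x.1 b)ᶜ := inf_le_inf_left _ (keyfm b c hbc')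
        _ = ⊥ := inf_compl_eq_bot
      · show OrthNonnegDecomp D (DBStar D B) (x - m)
        refine neg_bot_orthNonneg hF ?_
        intro z hz
        refine (sub_isLUB hF x m z).unique (isLUB_bot_of_all_bot ?_)
        rintro y ⟨b, c, hbc, rfl⟩
        have hbc' : b < c := by linarith
        refine le_bot_iff.1 ?_
        calc x.1 b ⊓ m.1 c ≤ x.1 b ⊓ (x.1 b)ᶜ := inf_le_inf_left _ (keygm b c hbc')
        _ = ⊥ := inf_compl_eq_bot
    · -- greatest lower bound
      intro v hv
      have hvf : specLE D (DBStar D B) v f := hv f (Set.mem_insert f {g})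
      have hvg : specLE D (DBStar D B) v g := hv g (Set.mem_insert_of_mem f rfl)
      have hvf' := orthNonneg_neg_bot hF hvf
      have hvg' := orthNonneg_neg_bot hF hvg
      have keyf : ∀ u w : D, u < w → f.1 u ⊓ v.1 w = ⊥ := by
        intro u w huw
        have h0 := hvf' (u - w) (by linarith)
        exact le_bot_iff.1 (h0 ▸ (sub_isLUB hF f v (u - w)).1 ⟨u, w, rfl, rfl⟩)
      have keyg : ∀ u w : D, u < w → g.1 u ⊓ v.1 w = ⊥ := by
        intro u w huw
        have h0 := hvg' (u - w) (by linarith)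
        exact le_bot_iff.1 (h0 ▸ (sub_isLUB hF g v (u - w)).1 ⟨u, w, rfl, rfl⟩)
      show OrthNonnegDecomp D (DBStar D B) (m - v)
      refine neg_bot_orthNonneg hF ?_
      intro z hz
      refine (sub_isLUB hF m v z).unique (isLUB_bot_of_all_bot ?_)
      rintro y ⟨b, c, hbc, rfl⟩
      have hbc' : b < c := by linarith
      rw [inf_eq_bot_iff_le_compl']
      refine (hm b).2 fun y hy => ?_
      obtain ⟨p, q, hpq, rfl⟩ := hy
      rw [← inf_eq_bot_iff_le_compl']
      refine le_bot_iff.1 ?_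
      rcases min_choice p q with hmin | hmin
      · have hp : p = b := by rw [← hpq, hmin]
        calc (f.1 p ⊓ g.1 q) ⊓ v.1 c ≤ f.1 p ⊓ v.1 c := inf_le_inf_right _ inf_le_left
        _ = ⊥ := keyf p c (by rw [hp]; exact hbc')
      · have hq : q = b := by rw [← hpq, hmin]
        calc (f.1 p ⊓ g.1 q) ⊓ v.1 c ≤ g.1 q ⊓ v.1 c := inf_le_inf_right _ inf_le_right
        _ = ⊥ := keyg q c (by rw [hq]; exact hbc')
  · refine ⟨j, ⟨?_, ?_⟩, hj⟩
    · intro x hx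
      simp only [Set.mem_insert_iff, Set.mem_singleton_iff] at hx
      rcases hx with rfl | rfl
      · show OrthNonnegDecomp D (DBStar D B) (j - x)
        refine neg_bot_orthNonneg hF ?_
        intro z hz
        refine (sub_isLUB hF j x z).unique (isLUB_bot_of_all_bot ?_)
        rintro y ⟨b, c, hbc, rfl⟩
        have hbc' : b < c := by linarith
        rw [inf_comm]
        refine le_bot_iff.1 ?_
        calc x.1 c ⊓ j.1 b ≤ x.1 c ⊓ (x.1 c)ᶜ := inf_le_inf_left _ (keyfj c b hbc')
        _ = ⊥ := inf_compl_eq_bot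
      · show OrthNonnegDecomp D (DBStar D B) (j - x)
        refine neg_bot_orthNonneg hF ?_
        intro z hz
        refine (sub_isLUB hF j x z).unique (isLUB_bot_of_all_bot ?_)
        rintro y ⟨b, c, hbc, rfl⟩
        have hbc' : b < c := by linarith
        rw [inf_comm]
        refine le_bot_iff.1 ?_
        calc x.1 c ⊓ j.1 b ≤ x.1 c ⊓ (x.1 c)ᶜ := inf_le_inf_left _ (keygj c b hbc')
        _ = ⊥ := inf_compl_eq_bot
    · intro v hv
      have hvf : specLE D (DBStar D B) f v := hv f (Set.mem_insert f {g})
      have hvg : specLE D (DBStar D B) g v := hv g (Set.mem_insert_of_mem f rfl)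
      have hvf' := orthNonneg_neg_bot hF hvf
      have hvg' := orthNonneg_neg_bot hF hvg
      have keyf : ∀ u w : D, u < w → v.1 u ⊓ f.1 w = ⊥ := by
        intro u w huw
        have h0 := hvf' (u - w) (by linarith)
        exact le_bot_iff.1 (h0 ▸ (sub_isLUB hF v f (u - w)).1 ⟨u, w, rfl, rfl⟩)
      have keyg : ∀ u w : D, u < w → v.1 u ⊓ g.1 w = ⊥ := by
        intro u w huw
        have h0 := hvg' (u - w) (by linarith)
        exact le_bot_iff.1 (h0 ▸ (sub_isLUB hF v g (u - w)).1 ⟨u, w, rfl, rfl⟩)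
      show OrthNonnegDecomp D (DBStar D B) (v - j)
      refine neg_bot_orthNonneg hF ?_
      intro z hz
      refine (sub_isLUB hF v j z).unique (isLUB_bot_of_all_bot ?_)
      rintro y ⟨b, c, hbc, rfl⟩
      have hbc' : b < c := by linarith
      rw [inf_comm, inf_eq_bot_iff_le_compl']
      refine (hj c).2 fun y hy => ?_
      obtain ⟨p, q, hpq, rfl⟩ := hy
      rw [← inf_eq_bot_iff_le_compl']
      refine le_bot_iff.1 ?_
      rcases max_choice p q with hmax | hmax
      · have hp : p = c := by rw [← hpq, hmax]
        calc (f.1 p ⊓ g.1 q) ⊓ v.1 b ≤ f.1 p ⊓ v.1 b := inf_le_inf_right _ inf_le_left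
        _ = ⊥ := by rw [inf_comm]; exact keyf b p (by rw [hp]; exact hbc')
      · have hq : q = c := by rw [← hpq, hmax]
        calc (f.1 p ⊓ g.1 q) ⊓ v.1 b ≤ g.1 q ⊓ v.1 b := inf_le_inf_right _ inf_le_right
        _ = ⊥ := by rw [inf_comm]; exact keyg b q (by rw [hq]; exact hbc')
end

section
/- Let D be a totally ordered integral domain, B a boolean algebra, and let D[B]^♭ carry the D-algebra structure transported along the bijection α : D[B]* → D[B]^♭, α(f)(a) = ⋁{f(b) : b ≥ a}. Then for f, g ∈ D[B]^♭ and a ∈ D: (f + g)(a) = ⋁{f(b₁) ∧ g(b₂) : b₁ + b₂ ≥ a}; if b > 0 in D then (bf)(a) = ⋁{f(c) : bc ≥ a}; and if f, g ≥ 0 then (fg)(a) = ⋁{f(b₁) ∧ g(b₂) : b₁, b₂ ≥ 0, b₁b₂ ≥ a}. -/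
open Finset

section StatementTenAux

variable {D B : Type*} [CommRing D] [LinearOrder D] [IsStrictOrderedRing D] [BooleanAlgebra B]

/-- In a boolean algebra, a meet of two LUBs is below `v` provided all pairwise
meets of members are below `v`. -/
lemma st10_inf_le_of_lub {S₁ S₂ : Set B} {u₁ u₂ v : B}
    (h₁ : IsLUB S₁ u₁) (h₂ : IsLUB S₂ u₂)
    (h : ∀ x ∈ S₁, ∀ y ∈ S₂, x ⊓ y ≤ v) : u₁ ⊓ u₂ ≤ v := by
  rw [← le_himp_iff]
  apply h₁.2
  intro x hx
  rw [le_himp_iff, inf_comm, ← le_himp_iff]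
  apply h₂.2
  intro y hy
  rw [le_himp_iff, inf_comm]
  exact h x hx y hy

variable [CommRing (DBStar D B)] [Algebra D (DBStar D B)]

lemma st10_idem (hF : FosterOps D B) {E : DBStar D B} (hE : E * E = E)
    {b : D} (hb0 : b ≠ 0) (hb1 : b ≠ 1) : E.1 b = ⊥ := by
  have h := hF.2.1 E E b
  rw [hE] at h
  have hle : E.1 b ≤ (E.1 b)ᶜ := by
    apply h.2
    rintro x ⟨c, d, hcd, rfl⟩
    by_cases hc : c = d
    · subst hc
      have hcb : c ≠ b := by
        rintro rfl
        have : c * (c - 1) = 0 := by ring_nf; linear_combination hcd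
        rcases mul_eq_zero.mp this with h0 | h1
        · exact hb0 h0
        · exact hb1 (by linarith [sub_eq_zero.mp h1])
      rw [inf_idem, le_compl_iff_disjoint_right, disjoint_iff]
      exact E.2.2.1 c b hcb
    · rw [E.2.2.1 c d hc]
      exact bot_le
  have h2 : E.1 b ≤ E.1 b ⊓ (E.1 b)ᶜ := le_inf le_rfl hle
  rwa [inf_compl_eq_bot, le_bot_iff] at h2

lemma st10_smul (hF : FosterOps D B) {a : D} (ha : 0 ≤ a) {E : DBStar D B}
    (hE : E * E = E) : ∀ c < 0, (a • E).1 c = ⊥ := by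
  intro c hc
  rw [← le_bot_iff]
  apply (hF.2.2 a E c).2
  rintro x ⟨d, hd, rfl⟩
  have hd0 : d ≠ 0 := by rintro rfl; rw [mul_zero] at hd; exact hc.ne hd.symm
  have hd1 : d ≠ 1 := by
    rintro rfl; rw [mul_one] at hd; exact absurd (hd ▸ ha) (not_le.mpr hc)
  exact (st10_idem hF hE hd0 hd1).le

lemma st10_add (hF : FosterOps D B) {F G : DBStar D B}
    (hFv : ∀ c < 0, F.1 c = ⊥) (hGv : ∀ c < 0, G.1 c = ⊥) :
    ∀ c < 0, (F + G).1 c = ⊥ := by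
  intro c hc
  rw [← le_bot_iff]
  apply (hF.1 F G c).2
  rintro x ⟨b, d, hbd, rfl⟩
  rcases lt_or_ge b 0 with hb | hb
  · rw [hFv b hb]; simp
  · have hd : d < 0 := by nlinarith
    rw [hGv d hd]; simp

lemma st10_zero (hF : FosterOps D B) : ∀ c < 0, (0 : DBStar D B).1 c = ⊥ := by
  intro c hc
  have h := hF.2.2 (0 : D) (0 : DBStar D B) c
  rw [zero_smul] at h
  rw [← le_bot_iff]
  apply h.2
  rintro x ⟨d, hd, rfl⟩
  rw [zero_mul] at hd
  exact absurd hd.symm hc.ne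

lemma st10_supp (hF : FosterOps D B) {F : DBStar D B}
    (h : OrthNonnegDecomp D (DBStar D B) F) : ∀ c < 0, F.1 c = ⊥ := by
  obtain ⟨n, a, e, ha, he, -, rfl⟩ := h
  refine Finset.sum_induction (fun i => a i • e i) (fun s => ∀ c < 0, s.1 c = ⊥)
    (fun x y hx hy => st10_add hF hx hy) (st10_zero hF) ?_
  intro i _
  exact st10_smul hF (ha i) (he i)

end StatementTenAux

/-- formulas for addition, positive scalar multiplication, and products of
nonnegative elements in `D[B]♭`, whose `D`-algebra structure is transported from `D[B]*`
along the bijection `α(f)(a) = ⋁{f b : b ≥ a}`. -/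
theorem statement10 (D B : Type*) [CommRing D] [LinearOrder D] [IsStrictOrderedRing D] [BooleanAlgebra B]
    [CommRing (DBStar D B)] [Algebra D (DBStar D B)] (hF : FosterOps D B)
    [CommRing (DBFlat D B)] [Algebra D (DBFlat D B)]
    (α : DBStar D B ≃ₐ[D] DBFlat D B)
    (hα : ∀ (f : DBStar D B) (a : D),
      IsLUB {x : B | ∃ b : D, a ≤ b ∧ x = f.1 b} ((α f).1 a)) :
    (∀ f g : DBFlat D B, ∀ a : D,
      IsLUB {x : B | ∃ b₁ b₂ : D, a ≤ b₁ + b₂ ∧ x = f.1 b₁ ⊓ g.1 b₂} ((f + g).1 a)) ∧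
    (∀ b : D, 0 < b → ∀ (f : DBFlat D B) (a : D),
      IsLUB {x : B | ∃ c : D, a ≤ b * c ∧ x = f.1 c} ((b • f).1 a)) ∧
    (∀ f g : DBFlat D B, OrthNonnegDecomp D (DBFlat D B) f →
      OrthNonnegDecomp D (DBFlat D B) g → ∀ a : D,
      IsLUB {x : B | ∃ b₁ b₂ : D, 0 ≤ b₁ ∧ 0 ≤ b₂ ∧ a ≤ b₁ * b₂ ∧ x = f.1 b₁ ⊓ g.1 b₂}
        ((f * g).1 a)) := by
  have hflub : ∀ (f : DBFlat D B) (c : D),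
      IsLUB {x : B | ∃ b : D, c ≤ b ∧ x = (α.symm f).1 b} (f.1 c) := by
    intro f c
    have := hα (α.symm f) c
    rwa [α.apply_symm_apply] at this
  have hmem : ∀ (f : DBFlat D B) (c : D), (α.symm f).1 c ≤ f.1 c := by
    intro f c
    exact (hflub f c).1 ⟨c, le_rfl, rfl⟩
  refine ⟨?_, ?_, ?_⟩
  · -- addition
    intro f g a
    have hfg : f + g = α (α.symm f + α.symm g) := by
      rw [map_add, α.apply_symm_apply, α.apply_symm_apply]
    have hX : IsLUB {x : B | ∃ b : D, a ≤ b ∧ x = (α.symm f + α.symm g).1 b}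
        ((f + g).1 a) := by
      rw [hfg]; exact hα _ a
    constructor
    · rintro x ⟨b₁, b₂, hab, rfl⟩
      apply st10_inf_le_of_lub (hflub f b₁) (hflub g b₂)
      rintro x ⟨c, hc, rfl⟩ y ⟨d, hd, rfl⟩
      refine le_trans ((hF.1 (α.symm f) (α.symm g) (c + d)).1 ⟨c, d, rfl, rfl⟩)
        (hX.1 ⟨c + d, by linarith, rfl⟩)
    · intro v hv
      apply hX.2
      rintro x ⟨b, hab, rfl⟩
      apply (hF.1 (α.symm f) (α.symm g) b).2
      rintro y ⟨c, d, hcd, rfl⟩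
      exact le_trans (inf_le_inf (hmem f c) (hmem g d))
        (hv ⟨c, d, by rw [hcd]; exact hab, rfl⟩)
  · -- scalar multiplication
    intro b hb f a
    have hbf : b • f = α (b • α.symm f) := by
      rw [map_smul, α.apply_symm_apply]
    have hX : IsLUB {x : B | ∃ c : D, a ≤ c ∧ x = (b • α.symm f).1 c}
        ((b • f).1 a) := by
      rw [hbf]; exact hα _ a
    constructor
    · rintro x ⟨c, hac, rfl⟩
      apply (hflub f c).2
      rintro y ⟨c', hcc', rfl⟩
      refine le_trans ((hF.2.2 b (α.symm f) (b * c')).1 ⟨c', rfl, rfl⟩)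
        (hX.1 ⟨b * c', ?_, rfl⟩)
      calc a ≤ b * c := hac
        _ ≤ b * c' := mul_le_mul_of_nonneg_left hcc' hb.le
    · intro v hv
      apply hX.2
      rintro x ⟨c, hac, rfl⟩
      apply (hF.2.2 b (α.symm f) c).2
      rintro y ⟨d, hbd, rfl⟩
      exact le_trans (hmem f d) (hv ⟨d, by rw [hbd]; exact hac, rfl⟩)
  · -- multiplication of nonnegative elements
    intro f g hfd hgd a
    have transfer : ∀ h : DBFlat D B, OrthNonnegDecomp D (DBFlat D B) h →
        OrthNonnegDecomp D (DBStar D B) (α.symm h) := by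
      rintro h ⟨n, a', e, ha', he, horth, hsum⟩
      refine ⟨n, a', fun i => α.symm (e i), ha', fun i => ?_, fun i j hij => ?_, ?_⟩
      · show α.symm (e i) * α.symm (e i) = α.symm (e i)
        rw [← map_mul]
        exact congrArg _ (he i)
      · rw [← map_mul, horth i j hij, map_zero]
      · rw [hsum, map_sum]
        simp only [map_smul]
    have hFv : ∀ c < 0, (α.symm f).1 c = ⊥ := st10_supp hF (transfer f hfd)
    have hGv : ∀ c < 0, (α.symm g).1 c = ⊥ := st10_supp hF (transfer g hgd)
    have hfg : f * g = α (α.symm f * α.symm g) := by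
      rw [map_mul, α.apply_symm_apply, α.apply_symm_apply]
    have hX : IsLUB {x : B | ∃ c : D, a ≤ c ∧ x = (α.symm f * α.symm g).1 c}
        ((f * g).1 a) := by
      rw [hfg]; exact hα _ a
    constructor
    · rintro x ⟨b₁, b₂, hb₁, hb₂, hab, rfl⟩
      apply st10_inf_le_of_lub (hflub f b₁) (hflub g b₂)
      rintro x ⟨c, hc, rfl⟩ y ⟨d, hd, rfl⟩
      refine le_trans ((hF.2.1 (α.symm f) (α.symm g) (c * d)).1 ⟨c, d, rfl, rfl⟩)
        (hX.1 ⟨c * d, ?_, rfl⟩)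
      calc a ≤ b₁ * b₂ := hab
        _ ≤ c * d := mul_le_mul hc hd hb₂ (hb₁.trans hc)
    · intro v hv
      apply hX.2
      rintro x ⟨c, hac, rfl⟩
      apply (hF.2.1 (α.symm f) (α.symm g) c).2
      rintro y ⟨b, d, hbd, rfl⟩
      rcases lt_or_ge b 0 with hb | hb
      · rw [hFv b hb]; simp
      rcases lt_or_ge d 0 with hd | hd
      · rw [hGv d hd]; simp
      exact le_trans (inf_le_inf (hmem f b) (hmem g d))
        (hv ⟨b, d, hb, hd, by rw [hbd]; exact hac, rfl⟩)
end

section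
/- Let D be a totally ordered integral domain, S a Specker D-algebra with its f-algebra order, and s ∈ S with a, b ∈ D, a < b. Suppose s^⊥(c) = 0 for all c with a < c < b (i.e., no coefficient of the full orthogonal decomposition of s lies strictly between a and b). Then (s ∧ b) − (s ∧ a) = ((s − a) ∧ (b − a)) ∨ 0 = (b − a)·s^♭(b), where s^♭(b) = ⋁{s^⊥(c) : c ≥ b}. -/
open Finset

section Aux
variable {D S : Type*} [CommRing D] [LinearOrder D] [IsStrictOrderedRing D] [CommRing S] [Algebra D S]

lemma aux_sum_smul_mul {n : ℕ} (E : Fin n → S) (hEi : ∀ i, IsIdempotentElem (E i))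
    (hEo : ∀ i j, i ≠ j → E i * E j = 0) (d : Fin n → D) (i : Fin n) :
    (∑ j, d j • E j) * E i = d i • E i := by
  rw [Finset.sum_mul, Finset.sum_eq_single i]
  · rw [smul_mul_assoc, hEi i]
  · intro j _ hj
    rw [smul_mul_assoc, hEo j i hj, smul_zero]
  · simp

lemma aux_pair_orth {k : ℕ} {m : Fin k → ℕ} (f : ∀ i, Fin (m i) → S) (E : Fin k → S)
    (hfo : ∀ i, ∀ p q, p ≠ q → f i p * f i q = 0)
    (hEo : ∀ i j, i ≠ j → E i * E j = 0)
    (P Q : Σ i, Fin (m i)) (h : P ≠ Q) :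
    f P.1 P.2 * E P.1 * (f Q.1 Q.2 * E Q.1) = 0 := by
  obtain ⟨i, j⟩ := P
  obtain ⟨i', j'⟩ := Q
  by_cases hii : i = i'
  · subst hii
    have hjj : j ≠ j' := by
      intro hj; exact h (by rw [hj])
    rw [show f i j * E i * (f i j' * E i) = f i j * f i j' * (E i * E i) from by ring,
      hfo i j j' hjj, zero_mul]
  · rw [show f i j * E i * (f i' j' * E i') = f i j * f i' j' * (E i * E i') from by ring,
      hEo i i' hii, mul_zero]

lemma aux_orth_sum_nonneg {k : ℕ} (x E : Fin k → S)
    (hx : ∀ i, OrthNonnegDecomp D S (x i))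
    (hE : ∀ i, IsIdempotentElem (E i))
    (hEo : ∀ i j, i ≠ j → E i * E j = 0) :
    OrthNonnegDecomp D S (∑ i, x i * E i) := by
  choose m d f hd hf hfo hxeq using hx
  let ι := Σ i : Fin k, Fin (m i)
  let eqv : ι ≃ Fin (Fintype.card ι) := Fintype.equivFin ι
  refine ⟨Fintype.card ι, (fun p => d (eqv.symm p).1 (eqv.symm p).2),
            (fun p => f (eqv.symm p).1 (eqv.symm p).2 * E (eqv.symm p).1), ?_, ?_, ?_, ?_⟩
  · intro p; exact hd _ _
  · intro p
    exact (hf _ _).mul_of_commute (mul_comm _ _) (hE _)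
  · intro p q hpq
    exact aux_pair_orth f E hfo hEo _ _ (fun h => hpq (eqv.symm.injective h))
  · have := Equiv.sum_comp eqv.symm
      (fun q : ι => d q.1 q.2 • (f q.1 q.2 * E q.1))
    rw [this, ← Finset.univ_sigma_univ, Finset.sum_sigma]
    refine Finset.sum_congr rfl (fun i _ => ?_)
    calc x i * E i = (∑ j, d i j • f i j) * E i := by rw [← hxeq]
    _ = ∑ j, d i j • (f i j * E i) := by
        rw [Finset.sum_mul]; simp [smul_mul_assoc]

variable [Lattice S] (hle : ∀ s t : S, s ≤ t ↔ OrthNonnegDecomp D S (t - s))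

lemma aux_sub_sum {n : ℕ} (E : Fin n → S) (d e : Fin n → D) :
    (∑ i, d i • E i) - (∑ i, e i • E i) = ∑ i, (d i - e i) • E i := by
  rw [← Finset.sum_sub_distrib]
  simp [sub_smul]

include hle in
lemma aux_le_sum {n : ℕ} (E : Fin n → S) (hEi : ∀ i, IsIdempotentElem (E i))
    (hEo : ∀ i j, i ≠ j → E i * E j = 0) (d e : Fin n → D) (h : ∀ i, e i ≤ d i) :
    (∑ i, e i • E i) ≤ (∑ i, d i • E i) := by
  rw [hle, aux_sub_sum]
  exact ⟨n, _, E, fun i => sub_nonneg.2 (h i), hEi, hEo, rfl⟩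

include hle in
lemma aux_inf_sum {n : ℕ} (E : Fin n → S) (hEi : ∀ i, IsIdempotentElem (E i))
    (hEo : ∀ i j, i ≠ j → E i * E j = 0) (hE1 : ∑ i, E i = 1) (d e : Fin n → D) :
    (∑ i, d i • E i) ⊓ (∑ i, e i • E i) = ∑ i, (min (d i) (e i)) • E i := by
  set u := ∑ i, d i • E i with hu
  set v := ∑ i, e i • E i with hv
  set t := ∑ i, (min (d i) (e i)) • E i with ht
  refine le_antisymm ?_ (le_inf
    (aux_le_sum hle E hEi hEo _ _ fun i => min_le_left _ _)
    (aux_le_sum hle E hEi hEo _ _ fun i => min_le_right _ _))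
  set w := u ⊓ v with hw
  rw [hle]
  have key : t - w = ∑ i, (if d i ≤ e i then u - w else v - w) * E i := by
    have expand : ∀ i, (if d i ≤ e i then u - w else v - w) * E i
        = min (d i) (e i) • E i - w * E i := by
      intro i
      by_cases h : d i ≤ e i
      · rw [if_pos h, min_eq_left h, sub_mul, hu, aux_sum_smul_mul E hEi hEo]
      · rw [if_neg h, min_eq_right (le_of_not_ge h), sub_mul, hv, aux_sum_smul_mul E hEi hEo]
    calc t - w = t - w * 1 := by rw [mul_one]
    _ = ∑ i, (min (d i) (e i) • E i - w * E i) := by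
        rw [← hE1, Finset.mul_sum, ht, ← Finset.sum_sub_distrib]
    _ = _ := by rw [Finset.sum_congr rfl (fun i _ => (expand i).symm)]
  rw [key]
  refine aux_orth_sum_nonneg _ E (fun i => ?_) hEi hEo
  by_cases h : d i ≤ e i
  · rw [if_pos h]; exact (hle w u).1 inf_le_left
  · rw [if_neg h]; exact (hle w v).1 inf_le_right

include hle in
lemma aux_sup_sum {n : ℕ} (E : Fin n → S) (hEi : ∀ i, IsIdempotentElem (E i))
    (hEo : ∀ i j, i ≠ j → E i * E j = 0) (hE1 : ∑ i, E i = 1) (d e : Fin n → D) :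
    (∑ i, d i • E i) ⊔ (∑ i, e i • E i) = ∑ i, (max (d i) (e i)) • E i := by
  set u := ∑ i, d i • E i with hu
  set v := ∑ i, e i • E i with hv
  set t := ∑ i, (max (d i) (e i)) • E i with ht
  refine le_antisymm (sup_le
    (aux_le_sum hle E hEi hEo _ _ fun i => le_max_left _ _)
    (aux_le_sum hle E hEi hEo _ _ fun i => le_max_right _ _)) ?_
  set w := u ⊔ v with hw
  rw [hle]
  have key : w - t = ∑ i, (if e i ≤ d i then w - u else w - v) * E i := by
    have expand : ∀ i, (if e i ≤ d i then w - u else w - v) * E i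
        = w * E i - max (d i) (e i) • E i := by
      intro i
      by_cases h : e i ≤ d i
      · rw [if_pos h, max_eq_left h, sub_mul, hu, aux_sum_smul_mul E hEi hEo]
      · rw [if_neg h, max_eq_right (le_of_not_ge h), sub_mul, hv, aux_sum_smul_mul E hEi hEo]
    calc w - t = w * 1 - t := by rw [mul_one]
    _ = ∑ i, (w * E i - max (d i) (e i) • E i) := by
        rw [← hE1, Finset.mul_sum, ht, ← Finset.sum_sub_distrib]
    _ = _ := by rw [Finset.sum_congr rfl (fun i _ => (expand i).symm)]
  rw [key]
  refine aux_orth_sum_nonneg _ E (fun i => ?_) hEi hEo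
  by_cases h : e i ≤ d i
  · rw [if_pos h]; exact (hle u w).1 le_sup_left
  · rw [if_neg h]; exact (hle v w).1 le_sup_right

end Aux


/-- if no coefficient of the full orthogonal decomposition of `s` lies
strictly between `a` and `b`, then
`(s ∧ b) − (s ∧ a) = ((s − a) ∧ (b − a)) ∨ 0 = (b − a)·s♭(b)`. -/
theorem statement12 (D S : Type*) [CommRing D] [LinearOrder D] [IsStrictOrderedRing D] [CommRing S] [Algebra D S]
    (hS : IsSpecker D S) [Lattice S]
    (hle : ∀ s t : S, s ≤ t ↔ OrthNonnegDecomp D S (t - s))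
    (s : S) {n : ℕ} (c : Fin n → D) (E : Fin n → S) (hdec : FullOrthDecomp D S c E s)
    (a b : D) (hab : a < b) (hgap : ∀ i, c i ≤ a ∨ b ≤ c i) :
    (s ⊓ algebraMap D S b) - (s ⊓ algebraMap D S a)
      = ((s - algebraMap D S a) ⊓ (algebraMap D S b - algebraMap D S a)) ⊔ 0 ∧
    (s ⊓ algebraMap D S b) - (s ⊓ algebraMap D S a)
      = (b - a) • ∑ i ∈ Finset.univ.filter (fun i => b ≤ c i), E i := by
  obtain ⟨hinj, hEi, hEne, hEo, hE1, hs⟩ := hdec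
  have hmap : ∀ x : D, algebraMap D S x = ∑ i, x • E i := fun x => by
    rw [Algebra.algebraMap_eq_smul_one, ← hE1, Finset.smul_sum]
  rw [hs, hmap a, hmap b]
  have infb := aux_inf_sum hle E hEi hEo hE1 c (fun _ => b)
  have infa := aux_inf_sum hle E hEi hEo hE1 c (fun _ => a)
  have L : (∑ i, c i • E i) ⊓ (∑ i, b • E i) - (∑ i, c i • E i) ⊓ (∑ i, a • E i)
      = ∑ i, (min (c i) b - min (c i) a) • E i := by
    rw [infb, infa, aux_sub_sum]
  constructor
  · rw [L, aux_sub_sum, aux_sub_sum,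
      aux_inf_sum hle E hEi hEo hE1 (fun i => c i - a) (fun _ => b - a)]
    have hsup := aux_sup_sum hle E hEi hEo hE1
      (fun i => min (c i - a) (b - a)) (fun _ => (0:D))
    simp only [zero_smul, Finset.sum_const_zero] at hsup
    rw [hsup]
    refine Finset.sum_congr rfl fun i _ => ?_
    rcases hgap i with h | h
    · rw [min_eq_left (le_of_lt (lt_of_le_of_lt h hab)), min_eq_left h,
        min_eq_left (by linarith : c i - a ≤ b - a),
        max_eq_right (by linarith : c i - a ≤ 0)]
      simp
    · rw [min_eq_right h, min_eq_right (le_of_lt (lt_of_lt_of_le hab h)),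
        min_eq_right (by linarith : b - a ≤ c i - a),
        max_eq_left (by linarith : (0:D) ≤ b - a)]
  · rw [L, Finset.smul_sum, Finset.sum_filter]
    refine Finset.sum_congr rfl fun i _ => ?_
    by_cases h : b ≤ c i
    · rw [if_pos h, min_eq_right h, min_eq_right (le_of_lt (lt_of_lt_of_le hab h))]
    · have hca : c i ≤ a := (hgap i).resolve_right h
      rw [if_neg h, min_eq_left (le_of_lt (lt_of_le_of_lt hca hab)), min_eq_left hca]
      simp
end

section
/- Let D be a totally ordered integral domain and S a Specker D-algebra. For any s, t ∈ S there exist a_0 < a_1 < ... < a_n in D with a_0·1 ≤ s, t ≤ a_n·1 such that s = a_0 + Σ_{i=1}^n (a_i − a_{i−1}) s^♭(a_i) and t = a_0 + Σ_{i=1}^n (a_i − a_{i−1}) t^♭(a_i); moreover if s, t ≥ 0 then one may take a_0 = 0. -/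
open Finset

section AuxSt13
variable {D S : Type*} [CommRing D] [LinearOrder D] [IsStrictOrderedRing D] [CommRing S] [Algebra D S]

lemma st13_telescope {n : ℕ} (a : Fin (n + 1) → D) (k : Fin (n + 1)) :
    ∑ i ∈ Finset.univ.filter (fun i : Fin n => (i : ℕ) < (k : ℕ)),
      (a i.succ - a i.castSucc) = a k - a 0 := by
  induction k using Fin.induction with
  | zero => simp
  | succ k ih =>
      have hfil : Finset.univ.filter (fun i : Fin n => (i : ℕ) < ((k.succ : Fin (n+1)) : ℕ)) =
          insert k (Finset.univ.filter (fun i : Fin n => (i : ℕ) < ((k.castSucc : Fin (n+1)) : ℕ))) := by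
        ext i
        simp [Fin.val_succ, Nat.lt_succ_iff_lt_or_eq, Fin.ext_iff, or_comm]
        rw [Fin.le_iff_val_le_val, Fin.lt_iff_val_lt_val]; omega
      rw [hfil, Finset.sum_insert (by simp), ih]
      ring

lemma st13_sum_eq {ns n : ℕ} (cs : Fin ns → D) (Es : Fin ns → S) (s : S)
    (hds : FullOrthDecomp D S cs Es s) (a : Fin (n + 1) → D) (ha : StrictMono a)
    (hmem : ∀ j, ∃ k, a k = cs j) :
    s = algebraMap D S (a 0) + ∑ i : Fin n, (a i.succ - a i.castSucc) •
          ∑ j ∈ Finset.univ.filter (fun j => a i.succ ≤ cs j), Es j := by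
  obtain ⟨-, -, -, -, hsum1, hs⟩ := hds
  have key : ∀ j : Fin ns,
      ∑ i ∈ Finset.univ.filter (fun i : Fin n => a i.succ ≤ cs j),
        (a i.succ - a i.castSucc) = cs j - a 0 := by
    intro j
    obtain ⟨k, hk⟩ := hmem j
    have hf : (Finset.univ.filter (fun i : Fin n => a i.succ ≤ cs j)) =
        Finset.univ.filter (fun i : Fin n => (i : ℕ) < (k : ℕ)) := by
      apply Finset.filter_congr
      intro i _
      rw [← hk, ha.le_iff_le, Fin.le_def, Fin.val_succ, Nat.succ_le_iff]
    rw [hf, st13_telescope, hk]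
  have hexp : ∀ i : Fin n, (a i.succ - a i.castSucc) •
        ∑ j ∈ Finset.univ.filter (fun j => a i.succ ≤ cs j), Es j
      = ∑ j : Fin ns, if a i.succ ≤ cs j then (a i.succ - a i.castSucc) • Es j else 0 := by
    intro i; rw [Finset.smul_sum, Finset.sum_filter]
  rw [hs, Algebra.algebraMap_eq_smul_one, ← hsum1, Finset.smul_sum,
    Finset.sum_congr rfl (fun i _ => hexp i), Finset.sum_comm, ← Finset.sum_add_distrib]
  refine Finset.sum_congr rfl fun j _ => ?_
  rw [← Finset.sum_filter, ← Finset.sum_smul, key j, ← add_smul]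
  ring_nf

lemma st13_lb [Lattice S] (hle : ∀ s t : S, s ≤ t ↔ OrthNonnegDecomp D S (t - s))
    {ns : ℕ} (cs : Fin ns → D) (Es : Fin ns → S) (s : S) (hds : FullOrthDecomp D S cs Es s)
    (b : D) (hb : ∀ j, b ≤ cs j) : algebraMap D S b ≤ s := by
  obtain ⟨-, hidem, -, horth, hsum1, hs⟩ := hds
  rw [hle]
  refine ⟨ns, fun j => cs j - b, Es, fun j => sub_nonneg.2 (hb j), hidem, horth, ?_⟩
  rw [hs, Algebra.algebraMap_eq_smul_one, ← hsum1, Finset.smul_sum, ← Finset.sum_sub_distrib]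
  exact Finset.sum_congr rfl fun j _ => (sub_smul _ _ _).symm

lemma st13_ub [Lattice S] (hle : ∀ s t : S, s ≤ t ↔ OrthNonnegDecomp D S (t - s))
    {ns : ℕ} (cs : Fin ns → D) (Es : Fin ns → S) (s : S) (hds : FullOrthDecomp D S cs Es s)
    (b : D) (hb : ∀ j, cs j ≤ b) : s ≤ algebraMap D S b := by
  obtain ⟨-, hidem, -, horth, hsum1, hs⟩ := hds
  rw [hle]
  refine ⟨ns, fun j => b - cs j, Es, fun j => sub_nonneg.2 (hb j), hidem, horth, ?_⟩
  rw [hs, Algebra.algebraMap_eq_smul_one, ← hsum1, Finset.smul_sum, ← Finset.sum_sub_distrib]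
  exact Finset.sum_congr rfl fun j _ => (sub_smul _ _ _).symm

lemma st13_coeff_nonneg [Lattice S] (hS : IsSpecker D S)
    (hle : ∀ s t : S, s ≤ t ↔ OrthNonnegDecomp D S (t - s))
    {ns : ℕ} (cs : Fin ns → D) (Es : Fin ns → S) (s : S) (hds : FullOrthDecomp D S cs Es s)
    (h0 : (0 : S) ≤ s) : ∀ j, 0 ≤ cs j := by
  obtain ⟨htf, -⟩ := hS
  obtain ⟨-, hidem, hne, horth, -, hs⟩ := hds
  intro j
  by_contra hneg
  push_neg at hneg
  obtain ⟨m, b, f, hb0, hfidem, hforth, hsf⟩ := (hle 0 s).1 h0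
  rw [sub_zero] at hsf
  have hsE : s * Es j = cs j • Es j := by
    rw [hs, Finset.sum_mul, Finset.sum_eq_single j]
    · rw [smul_mul_assoc, hidem j]
    · intro k _ hk; rw [smul_mul_assoc, horth k j hk, smul_zero]
    · simp
  have hEf : ∀ i, Es j * f i = 0 := by
    intro i
    have h1 : s * Es j * f i = b i • (Es j * f i) := by
      rw [hsf, Finset.sum_mul, Finset.sum_mul, Finset.sum_eq_single i]
      · have hprod : f i * Es j * f i = Es j * (f i * f i) := by ring
        rw [smul_mul_assoc, smul_mul_assoc, hprod, hfidem i]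
      · intro k _ hk
        have hprod : f k * Es j * f i = Es j * (f k * f i) := by ring
        rw [smul_mul_assoc, smul_mul_assoc, hprod, hforth k i hk, mul_zero, smul_zero]
      · simp
    have hcs : cs j • (Es j * f i) = b i • (Es j * f i) := by
      rw [← smul_mul_assoc, ← hsE]
      exact h1
    have h2 : (cs j - b i) • (Es j * f i) = 0 := by
      rw [sub_smul, hcs, sub_self]
    rcases htf _ _ h2 with h | h
    · exfalso; have := hb0 i; have hlt : cs j - b i < 0 := by linarith
      exact absurd h (ne_of_lt hlt)
    · exact h
  have hz : cs j • Es j = 0 := by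
    rw [← hsE, hsf, Finset.sum_mul]
    refine Finset.sum_eq_zero fun i _ => ?_
    rw [smul_mul_assoc, mul_comm (f i) (Es j), hEf i, smul_zero]
  rcases htf _ _ hz with h | h
  · exact absurd h (ne_of_lt hneg)
  · exact hne j h

lemma st13_build [Lattice S] (hle : ∀ s t : S, s ≤ t ↔ OrthNonnegDecomp D S (t - s))
    {ns nt : ℕ} (cs : Fin ns → D) (Es : Fin ns → S) (ct : Fin nt → D) (Et : Fin nt → S)
    (s t : S) (hds : FullOrthDecomp D S cs Es s) (hdt : FullOrthDecomp D S ct Et t)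
    (A : Finset D) (hA : A.Nonempty) (hsA : ∀ j, cs j ∈ A) (htA : ∀ j, ct j ∈ A) :
    ∃ (n : ℕ) (a : Fin (n + 1) → D), a 0 = A.min' hA ∧ StrictMono a ∧
      algebraMap D S (a 0) ≤ s ∧ s ≤ algebraMap D S (a (Fin.last n)) ∧
      algebraMap D S (a 0) ≤ t ∧ t ≤ algebraMap D S (a (Fin.last n)) ∧
      s = algebraMap D S (a 0) + ∑ i : Fin n, (a i.succ - a i.castSucc) •
            ∑ j ∈ Finset.univ.filter (fun j => a i.succ ≤ cs j), Es j ∧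
      t = algebraMap D S (a 0) + ∑ i : Fin n, (a i.succ - a i.castSucc) •
            ∑ j ∈ Finset.univ.filter (fun j => a i.succ ≤ ct j), Et j := by
  have hcard : A.card = (A.card - 1) + 1 := (Nat.succ_pred_eq_of_pos hA.card_pos).symm
  set n := A.card - 1 with hn
  let e := A.orderIsoOfFin hcard
  set a : Fin (n + 1) → D := fun i => (e i : D) with ha
  have hmono : StrictMono a := fun i j h => Subtype.coe_lt_coe.2 (e.strictMono h)
  have hmemA : ∀ i, a i ∈ A := fun i => (e i).2
  have hsurj : ∀ x ∈ A, ∃ k, a k = x := by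
    intro x hx
    exact ⟨e.symm ⟨x, hx⟩, by simp [ha, e.apply_symm_apply]⟩
  have h0 : a 0 = A.min' hA := by
    refine le_antisymm ?_ (A.min'_le _ (hmemA 0))
    obtain ⟨k, hk⟩ := hsurj _ (A.min'_mem hA)
    rw [← hk]
    exact hmono.monotone (Fin.zero_le k)
  have hlast : a (Fin.last n) = A.max' hA := by
    refine le_antisymm (A.le_max' _ (hmemA _)) ?_
    obtain ⟨k, hk⟩ := hsurj _ (A.max'_mem hA)
    rw [← hk]
    exact hmono.monotone (Fin.le_last k)
  have hlbs : ∀ j, a 0 ≤ cs j := fun j => h0 ▸ A.min'_le _ (hsA j)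
  have hlbt : ∀ j, a 0 ≤ ct j := fun j => h0 ▸ A.min'_le _ (htA j)
  have hubs : ∀ j, cs j ≤ a (Fin.last n) := fun j => hlast ▸ A.le_max' _ (hsA j)
  have hubt : ∀ j, ct j ≤ a (Fin.last n) := fun j => hlast ▸ A.le_max' _ (htA j)
  exact ⟨n, a, h0, hmono,
    st13_lb hle cs Es s hds _ hlbs, st13_ub hle cs Es s hds _ hubs,
    st13_lb hle ct Et t hdt _ hlbt, st13_ub hle ct Et t hdt _ hubt,
    st13_sum_eq cs Es s hds a hmono (fun j => hsurj _ (hsA j)),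
    st13_sum_eq ct Et t hdt a hmono (fun j => hsurj _ (htA j))⟩

end AuxSt13

/-- any two elements of a Specker `D`-algebra admit compatible decreasing
decompositions `s = a₀ + Σ (aᵢ − aᵢ₋₁)·s♭(aᵢ)`, `t = a₀ + Σ (aᵢ − aᵢ₋₁)·t♭(aᵢ)`, with
`a₀ ≤ s, t ≤ aₙ`; and if `s, t ≥ 0` one may take `a₀ = 0`. -/
theorem statement13 (D S : Type*) [CommRing D] [LinearOrder D] [IsStrictOrderedRing D] [CommRing S] [Algebra D S]
    (hS : IsSpecker D S) [Lattice S]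
    (hle : ∀ s t : S, s ≤ t ↔ OrthNonnegDecomp D S (t - s))
    (s t : S) {ns nt : ℕ} (cs : Fin ns → D) (Es : Fin ns → S)
    (ct : Fin nt → D) (Et : Fin nt → S)
    (hds : FullOrthDecomp D S cs Es s) (hdt : FullOrthDecomp D S ct Et t) :
    (∃ (n : ℕ) (a : Fin (n + 1) → D), StrictMono a ∧
      algebraMap D S (a 0) ≤ s ∧ s ≤ algebraMap D S (a (Fin.last n)) ∧
      algebraMap D S (a 0) ≤ t ∧ t ≤ algebraMap D S (a (Fin.last n)) ∧
      s = algebraMap D S (a 0) + ∑ i : Fin n, (a i.succ - a i.castSucc) •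
            ∑ j ∈ Finset.univ.filter (fun j => a i.succ ≤ cs j), Es j ∧
      t = algebraMap D S (a 0) + ∑ i : Fin n, (a i.succ - a i.castSucc) •
            ∑ j ∈ Finset.univ.filter (fun j => a i.succ ≤ ct j), Et j) ∧
    (0 ≤ s → 0 ≤ t →
      ∃ (n : ℕ) (a : Fin (n + 1) → D), a 0 = 0 ∧ StrictMono a ∧
        algebraMap D S (a 0) ≤ s ∧ s ≤ algebraMap D S (a (Fin.last n)) ∧
        algebraMap D S (a 0) ≤ t ∧ t ≤ algebraMap D S (a (Fin.last n)) ∧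
        s = algebraMap D S (a 0) + ∑ i : Fin n, (a i.succ - a i.castSucc) •
              ∑ j ∈ Finset.univ.filter (fun j => a i.succ ≤ cs j), Es j ∧
        t = algebraMap D S (a 0) + ∑ i : Fin n, (a i.succ - a i.castSucc) •
              ∑ j ∈ Finset.univ.filter (fun j => a i.succ ≤ ct j), Et j) := by
  classical
  set A : Finset D := insert (0 : D) ((Finset.univ.image cs) ∪ (Finset.univ.image ct))
    with hAdef
  have hA : A.Nonempty := Finset.insert_nonempty _ _
  have hsA : ∀ j, cs j ∈ A := fun j => by
    simp [hAdef, Finset.mem_insert, Finset.mem_union, Finset.mem_image]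
  have htA : ∀ j, ct j ∈ A := fun j => by
    simp [hAdef, Finset.mem_insert, Finset.mem_union, Finset.mem_image]
  obtain ⟨n, a, h0, hmono, hls, hus, hlt, hut, heqs, heqt⟩ :=
    st13_build hle cs Es ct Et s t hds hdt A hA hsA htA
  refine ⟨⟨n, a, hmono, hls, hus, hlt, hut, heqs, heqt⟩, fun hs0 ht0 => ?_⟩
  have hmin : A.min' hA = 0 := by
    refine le_antisymm (A.min'_le _ (Finset.mem_insert_self _ _)) ?_
    apply Finset.le_min'
    intro x hx
    rw [hAdef] at hx
    rcases Finset.mem_insert.1 hx with h | h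
    · exact h.ge
    · rcases Finset.mem_union.1 h with h | h
      · obtain ⟨j, -, rfl⟩ := Finset.mem_image.1 h
        exact st13_coeff_nonneg hS hle cs Es s hds hs0 j
      · obtain ⟨j, -, rfl⟩ := Finset.mem_image.1 h
        exact st13_coeff_nonneg hS hle ct Et t hdt ht0 j
  exact ⟨n, a, h0.trans hmin, hmono, hls, hus, hlt, hut, heqs, heqt⟩
end

section
/- Let D be a totally ordered integral domain and (S, ◁) a proximity Specker D-algebra. Then the restriction of ◁ to Id(S) is a de Vries proximity on the boolean algebra Id(S). -/
open Finset
set_option linter.unusedSectionVars false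

section Helpers
variable {D S : Type*} [CommRing D] [LinearOrder D] [IsStrictOrderedRing D] [CommRing S] [Algebra D S] [Lattice S]

lemma sp14_idem_mul {x y : S} (hx : IsIdempotentElem x) (hy : IsIdempotentElem y) :
    IsIdempotentElem (x * y) := by
  unfold IsIdempotentElem at *
  rw [mul_mul_mul_comm, hx, hy]

lemma sp14_idem_sum {n : ℕ} (e : Fin n → S) (s : Finset (Fin n))
    (hi : ∀ i, IsIdempotentElem (e i)) (ho : ∀ i j, i ≠ j → e i * e j = 0) :
    IsIdempotentElem (∑ i ∈ s, e i) := by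
  unfold IsIdempotentElem
  rw [Finset.sum_mul_sum]
  refine Finset.sum_congr rfl fun i hi' => ?_
  rw [Finset.sum_eq_single_of_mem i hi' (fun j _ hj => ho i j (Ne.symm hj)), hi i]

variable (hle : ∀ s t : S, s ≤ t ↔ OrthNonnegDecomp D S (t - s))
include hle

lemma sp14_nonneg_iff (x : S) : 0 ≤ x ↔ OrthNonnegDecomp D S x := by
  simpa using hle 0 x

lemma sp14_le_iff_sub (x y : S) : x ≤ y ↔ 0 ≤ y - x :=
  (hle x y).trans (sp14_nonneg_iff hle (y - x)).symm

lemma sp14_idem_nonneg {e : S} (he : IsIdempotentElem e) : 0 ≤ e := by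
  rw [sp14_nonneg_iff hle]
  exact ⟨1, fun _ => 1, fun _ => e, fun _ => zero_le_one, fun _ => he,
    fun i j hij => absurd (Subsingleton.elim i j) hij, by simp⟩

lemma sp14_nonneg_smul_x {m : D} {x : S} (hm : 0 ≤ m) (hx : 0 ≤ x) : 0 ≤ m • x := by
  rw [sp14_nonneg_iff hle] at hx ⊢
  obtain ⟨n, a, e, ha, hi, ho, rfl⟩ := hx
  exact ⟨n, fun i => m * a i, e, fun i => mul_nonneg hm (ha i), hi, ho, by
    rw [Finset.smul_sum]; exact Finset.sum_congr rfl fun i _ => by simp [smul_smul]⟩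

lemma sp14_nonneg_mul_idem {x k : S} (hx : 0 ≤ x) (hk : IsIdempotentElem k) : 0 ≤ x * k := by
  rw [sp14_nonneg_iff hle] at hx ⊢
  obtain ⟨n, a, e, ha, hi, ho, rfl⟩ := hx
  refine ⟨n, a, fun i => e i * k, ha, fun i => sp14_idem_mul (hi i) hk, fun i j hij => ?_, ?_⟩
  · rw [mul_mul_mul_comm, ho i j hij, zero_mul]
  · rw [Finset.sum_mul]; exact Finset.sum_congr rfl fun i _ => smul_mul_assoc (a i) (e i) k

lemma sp14_mul_le_idem {x y k : S} (h : x ≤ y) (hk : IsIdempotentElem k) : x * k ≤ y * k := by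
  rw [sp14_le_iff_sub hle] at h ⊢
  have h2 := sp14_nonneg_mul_idem hle h hk
  rwa [sub_mul] at h2


omit hle in
lemma sp14_full_of_decomp {x : S} (h : OrthNonnegDecomp D S x) :
    ∃ (n : ℕ) (a : Fin n → D) (e : Fin n → S), (∀ i, 0 ≤ a i) ∧ (∀ i, IsIdempotentElem (e i)) ∧
      (∀ i j, i ≠ j → e i * e j = 0) ∧ (∑ i, e i = 1) ∧ x = ∑ i, a i • e i := by
  obtain ⟨n, a, e, ha, hi, ho, rfl⟩ := h
  have hT : IsIdempotentElem (∑ i, e i) := sp14_idem_sum e univ hi ho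
  have hTmul : ∀ j, (∑ i, e i) * e j = e j := fun j => by
    rw [Finset.sum_mul,
      Finset.sum_eq_single j (fun i _ hij => ho i j hij) (fun h => absurd (mem_univ j) h), hi j]
  refine ⟨n + 1, Fin.cons 0 a, Fin.cons (1 - ∑ i, e i) e, ?_, ?_, ?_, ?_, ?_⟩
  · intro i
    refine Fin.cases ?_ ?_ i
    · simp
    · intro j; simpa using ha j
  · intro i
    refine Fin.cases ?_ ?_ i
    · simpa using hT.one_sub
    · intro j; simpa using hi j
  · intro i j
    refine Fin.cases ?_ ?_ i <;> [skip ; intro i'] <;> refine Fin.cases ?_ ?_ j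
    · intro hij; exact absurd rfl hij
    · intro j' _
      simp only [Fin.cons_zero, Fin.cons_succ]
      rw [sub_mul, one_mul, hTmul j', sub_self]
    · intro hij
      simp only [Fin.cons_zero, Fin.cons_succ]
      rw [mul_comm, sub_mul, one_mul, hTmul i', sub_self]
    · intro j' hij
      simp only [Fin.cons_succ]
      exact ho i' j' (fun h => hij (congrArg Fin.succ h))
  · rw [Fin.sum_univ_succ]
    simp only [Fin.cons_zero, Fin.cons_succ]
    ring
  · rw [Fin.sum_univ_succ]
    simp only [Fin.cons_zero, Fin.cons_succ, zero_smul, zero_add]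

lemma sp14_nonneg_add_x {x y : S} (hx : 0 ≤ x) (hy : 0 ≤ y) : 0 ≤ x + y := by
  rw [sp14_nonneg_iff hle] at hx hy ⊢
  obtain ⟨n, A, E, hA, hE, hoE, hsE, rfl⟩ := sp14_full_of_decomp hx
  obtain ⟨p, B, F, hB, hF, hoF, hsF, rfl⟩ := sp14_full_of_decomp hy
  refine ⟨n * p, fun k => A (finProdFinEquiv.symm k).1 + B (finProdFinEquiv.symm k).2,
    fun k => E (finProdFinEquiv.symm k).1 * F (finProdFinEquiv.symm k).2,
    fun k => add_nonneg (hA _) (hB _), fun k => sp14_idem_mul (hE _) (hF _), ?_, ?_⟩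
  · intro k l hkl
    have hne : (finProdFinEquiv.symm k) ≠ (finProdFinEquiv.symm l) :=
      fun h => hkl (finProdFinEquiv.symm.injective h)
    rw [mul_mul_mul_comm]
    rcases eq_or_ne (finProdFinEquiv.symm k).1 (finProdFinEquiv.symm l).1 with h1 | h1
    · have h2 : (finProdFinEquiv.symm k).2 ≠ (finProdFinEquiv.symm l).2 := by
        intro h2; exact hne (Prod.ext h1 h2)
      rw [hoF _ _ h2, mul_zero]
    · rw [hoE _ _ h1, zero_mul]
  · calc (∑ i, A i • E i) + (∑ j, B j • F j)
        = ∑ z : Fin n × Fin p, (A z.1 + B z.2) • (E z.1 * F z.2) := by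
          rw [Fintype.sum_prod_type]
          simp only [add_smul, Finset.sum_add_distrib]
          congr 1
          · refine Finset.sum_congr rfl fun i _ => ?_
            rw [← Finset.smul_sum, ← Finset.mul_sum, hsF, mul_one]
          · rw [Finset.sum_comm]
            refine Finset.sum_congr rfl fun j _ => ?_
            rw [← Finset.smul_sum, ← Finset.sum_mul, hsE, one_mul]
      _ = ∑ k : Fin (n * p),
            (A (finProdFinEquiv.symm k).1 + B (finProdFinEquiv.symm k).2) •
              (E (finProdFinEquiv.symm k).1 * F (finProdFinEquiv.symm k).2) :=
          (Equiv.sum_comp finProdFinEquiv.symm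
            (fun z : Fin n × Fin p => (A z.1 + B z.2) • (E z.1 * F z.2))).symm

lemma sp14_add_le_add_x {a b c d : S} (h1 : a ≤ b) (h2 : c ≤ d) : a + c ≤ b + d := by
  rw [sp14_le_iff_sub hle] at h1 h2 ⊢
  have h3 := sp14_nonneg_add_x hle h1 h2
  rwa [show b - a + (d - c) = b + d - (a + c) by ring] at h3

lemma sp14_nonpos_iff_neg (x : S) : x ≤ 0 ↔ 0 ≤ -x := by
  rw [hle, sp14_nonneg_iff hle, zero_sub]

lemma sp14_coeff_nonneg (htf : SpTorsionFree D S) {b : D} {k : S} (hk : IsIdempotentElem k)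
    (hk0 : k ≠ 0) (h : 0 ≤ b • k) : 0 ≤ b := by
  by_contra hb
  push_neg at hb
  have h1 : 0 ≤ (-b) • k := sp14_nonneg_smul_x hle (by linarith) (sp14_idem_nonneg hle hk)
  have h2 : b • k ≤ 0 := by rw [sp14_nonpos_iff_neg hle]; rwa [← neg_smul]
  have h3 : b • k = 0 := le_antisymm h2 h
  rcases htf b k h3 with h' | h'
  · exact absurd h' (by intro h''; rw [h''] at hb; exact lt_irrefl 0 hb)
  · exact hk0 h'

omit hle in
lemma sp14_sum_mul_single {n : ℕ} (a : Fin n → D) (e : Fin n → S)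
    (hi : ∀ i, IsIdempotentElem (e i)) (ho : ∀ i j, i ≠ j → e i * e j = 0) (j : Fin n) :
    (∑ i, a i • e i) * e j = a j • e j := by
  rw [Finset.sum_mul,
    Finset.sum_eq_single j
      (fun i _ hij => by rw [smul_mul_assoc, ho i j hij, smul_zero])
      (fun h => absurd (mem_univ j) h),
    smul_mul_assoc, hi j]

lemma sp14_inf_smul_one {g : S} (hg : IsIdempotentElem g) {m : D} (hm0 : 0 ≤ m) (hm1 : m ≤ 1) :
    g ⊓ (m • (1 : S)) = m • g := by
  apply le_antisymm
  · set z := g ⊓ m • (1 : S) with hz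
    have hz1 : z ≤ g := inf_le_left
    have hz2 : z ≤ m • 1 := inf_le_right
    have h1 : z * g ≤ (m • (1 : S)) * g := sp14_mul_le_idem hle hz2 hg
    rw [smul_mul_assoc, one_mul] at h1
    have h2 : z * (1 - g) ≤ g * (1 - g) := sp14_mul_le_idem hle hz1 hg.one_sub
    have h3 : g * (1 - g) = 0 := by
      have := hg; unfold IsIdempotentElem at this
      rw [mul_sub, mul_one, this, sub_self]
    rw [h3] at h2
    have h4 : z * g + z * (1 - g) ≤ m • g + 0 := sp14_add_le_add_x hle h1 h2
    calc z = z * g + z * (1 - g) := by ring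
      _ ≤ m • g + 0 := h4
      _ = m • g := add_zero _
  · refine le_inf ?_ ?_
    · rw [sp14_le_iff_sub hle, show g - m • g = (1 - m) • g by rw [sub_smul, one_smul]]
      exact sp14_nonneg_smul_x hle (by linarith) (sp14_idem_nonneg hle hg)
    · rw [sp14_le_iff_sub hle, show m • (1 : S) - m • g = m • (1 - g) from (smul_sub m 1 g).symm]
      exact sp14_nonneg_smul_x hle hm0 (sp14_idem_nonneg hle hg.one_sub)


lemma sp14_star_lemma {r : S → S → Prop} (htf : SpTorsionFree D S) (hr : IsProximity D S r)
    {u g : S} (hu0 : 0 ≤ u) (hu1 : u ≤ 1) (hg : IsIdempotentElem g) (hug : r u g) :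
    ∃ h : S, IsIdempotentElem h ∧ u ≤ h ∧ r h g ∧ (u ≠ 0 → h ≠ 0) := by
  classical
  obtain ⟨⟨hr0, hr1⟩, hP2, hP3, hP4, hP5, hP6, hP7, hP7', hP8, hP9, hP10⟩ := hr
  obtain ⟨n, a, e, ha, hi, ho, hu⟩ := (sp14_nonneg_iff hle u).mp hu0
  set J : Finset (Fin n) := univ.filter (fun i => a i ≠ 0 ∧ e i ≠ 0) with hJ
  set h : S := ∑ i ∈ J, e i with hh
  have hmem : ∀ i, i ∈ J ↔ (a i ≠ 0 ∧ e i ≠ 0) := by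
    intro i; rw [hJ, mem_filter]; simp
  have hzero : ∀ i, i ∉ J → a i • e i = 0 := by
    intro i hiJ
    by_cases h1 : a i = 0
    · rw [h1, zero_smul]
    · by_cases h2 : e i = 0
      · rw [h2, smul_zero]
      · exact absurd ((hmem i).mpr ⟨h1, h2⟩) hiJ
  have hhidem : IsIdempotentElem h := sp14_idem_sum e J hi ho
  have hcoeff : ∀ j, u * e j = a j • e j := by
    intro j; rw [hu]; exact sp14_sum_mul_single a e hi ho j
  have hale : ∀ j, e j ≠ 0 → a j ≤ 1 := by
    intro j hj
    have h2 : u * e j ≤ 1 * e j := sp14_mul_le_idem hle hu1 (hi j)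
    rw [hcoeff j, one_mul] at h2
    rw [sp14_le_iff_sub hle] at h2
    rw [show e j - a j • e j = (1 - a j) • e j by rw [sub_smul, one_smul]] at h2
    have h4 := sp14_coeff_nonneg hle htf (hi j) hj h2
    linarith
  have huh : u ≤ h := by
    rw [sp14_le_iff_sub hle, sp14_nonneg_iff hle]
    refine ⟨n, fun i => if i ∈ J then 1 - a i else 0, e, ?_, hi, ho, ?_⟩
    · intro i
      by_cases hiJ : i ∈ J
      · simp only [hiJ, if_true]
        have h5 : e i ≠ 0 := ((hmem i).mp hiJ).2
        have := hale i h5; linarith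
      · simp [hiJ]
    · have hterm : ∀ i ∈ (univ : Finset (Fin n)),
          (if i ∈ J then (1 : D) - a i else 0) • e i
            = (if i ∈ J then e i else 0) - a i • e i := by
        intro i _
        by_cases hiJ : i ∈ J
        · simp only [hiJ, if_true, sub_smul, one_smul]
        · simp only [hiJ, if_false, zero_smul, hzero i hiJ, sub_zero]
      rw [Finset.sum_congr rfl hterm, Finset.sum_sub_distrib, ← hu, Finset.sum_ite_mem,
        univ_inter]
  have hgnn : 0 ≤ g := sp14_idem_nonneg hle hg
  rcases J.eq_empty_or_nonempty with hJe | hJne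
  · have hh0 : h = 0 := by rw [hh, hJe, Finset.sum_empty]
    refine ⟨h, hhidem, huh, ?_, ?_⟩
    · rw [hh0]; exact hP3 0 0 0 g le_rfl hr0 hgnn
    · intro hu0'
      exfalso; apply hu0'
      have h6 : u ≤ 0 := hh0 ▸ huh
      exact le_antisymm h6 hu0
  · set m := J.inf' hJne a with hm
    obtain ⟨j₀, hj₀, hmj⟩ := Finset.exists_mem_eq_inf' hJne a
    have hj₀' := (hmem j₀).mp hj₀
    have hm0 : 0 < m := by
      rw [hm, hmj]; exact lt_of_le_of_ne (ha j₀) (Ne.symm hj₀'.1)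
    have hm1 : m ≤ 1 := by rw [hm, hmj]; exact hale j₀ hj₀'.2
    have hmh : m • h ≤ u := by
      rw [sp14_le_iff_sub hle, sp14_nonneg_iff hle]
      refine ⟨n, fun i => if i ∈ J then a i - m else a i, e, ?_, hi, ho, ?_⟩
      · intro i
        by_cases hiJ : i ∈ J
        · simp only [hiJ, if_true, sub_nonneg]
          exact Finset.inf'_le a hiJ
        · simp only [hiJ, if_false]; exact ha i
      · have hterm : ∀ i ∈ (univ : Finset (Fin n)),
            (if i ∈ J then a i - m else a i) • e i
              = a i • e i - (if i ∈ J then m • e i else 0) := by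
          intro i _
          by_cases hiJ : i ∈ J
          · simp only [hiJ, if_true, sub_smul]
          · simp only [hiJ, if_false, sub_zero]
        rw [Finset.sum_congr rfl hterm, Finset.sum_sub_distrib, ← hu, Finset.sum_ite_mem,
          univ_inter, ← Finset.smul_sum]
    have h1 : r (m • h) g := hP3 _ u g g hmh hug le_rfl
    have h2 : r h 1 := by
      have hh1 : h ≤ 1 := by rw [sp14_le_iff_sub hle]; exact sp14_idem_nonneg hle hhidem.one_sub
      exact hP3 h 1 1 1 hh1 hr1 le_rfl
    have h3 : r (m • h) (m • (1 : S)) := hP7 h 1 m hm0 h2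
    have h4 : r (m • h) (g ⊓ m • (1 : S)) := hP4 _ _ _ h1 h3
    rw [sp14_inf_smul_one hle hg hm0.le hm1] at h4
    have h5 : r h g := hP7' h g ⟨m, hm0, h4⟩
    refine ⟨h, hhidem, huh, h5, fun _ hh0 => ?_⟩
    have h7 : h * e j₀ = e j₀ := by
      rw [hh, Finset.sum_mul,
        Finset.sum_eq_single_of_mem j₀ hj₀ (fun i _ hij => ho i j₀ hij), hi j₀]
    rw [hh0, zero_mul] at h7
    exact hj₀'.2 h7.symm

end Helpers

set_option maxHeartbeats 1000000 in
/-- a proximity on a proximity Specker `D`-algebra restricts to a de Vries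
proximity on the boolean algebra of idempotents (boolean operations expressed ring
theoretically: `e ∧ f = ef`, `¬e = 1 − e`, `e ≤ f ↔ ef = e`). -/
theorem statement14 (D S : Type*) [CommRing D] [LinearOrder D] [IsStrictOrderedRing D] [CommRing S] [Algebra D S]
    (hS : IsSpecker D S) [Lattice S]
    (hle : ∀ s t : S, s ≤ t ↔ OrthNonnegDecomp D S (t - s))
    (r : S → S → Prop) (hr : IsProximity D S r) :
    (r 0 0 ∧ r 1 1) ∧
    (∀ e f : S, IsIdempotentElem e → IsIdempotentElem f → r e f → e * f = e) ∧
    (∀ a b c d : S, IsIdempotentElem a → IsIdempotentElem b → IsIdempotentElem c →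
      IsIdempotentElem d → a * b = a → r b c → c * d = c → r a d) ∧
    (∀ a b c : S, IsIdempotentElem a → IsIdempotentElem b → IsIdempotentElem c →
      r a b → r a c → r a (b * c)) ∧
    (∀ a b : S, IsIdempotentElem a → IsIdempotentElem b → r a b → r (1 - b) (1 - a)) ∧
    (∀ a b : S, IsIdempotentElem a → IsIdempotentElem b → r a b →
      ∃ c : S, IsIdempotentElem c ∧ r a c ∧ r c b) ∧
    (∀ a : S, IsIdempotentElem a → a ≠ 0 →
      ∃ b : S, IsIdempotentElem b ∧ b ≠ 0 ∧ r b a) := by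
  classical
  obtain ⟨htf, -⟩ := hS
  have hr2 := hr
  obtain ⟨⟨hr0, hr1⟩, hP2, hP3, hP4, hP5, hP6, hP7, hP7', hP8, hP9, hP10⟩ := hr2
  refine ⟨⟨hr0, hr1⟩, ?_, ?_, ?_, ?_, ?_, ?_⟩
  · -- r e f implies e * f = e
    intro e f he hf hef
    have he' : e * e = e := he
    have hf' : f * f = f := hf
    have hef' : e ≤ f := hP2 e f hef
    obtain ⟨n, a, ee, ha, hi, ho, hd⟩ := (hle e f).mp hef'
    have key0 : e * (f - e) * (f - e) + e * (f - e) = 0 := by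
      linear_combination e * hf' + (e - 2 * f) * he'
    have hw1 : e * (f - e) = ∑ i, a i • (e * ee i) := by
      rw [hd, Finset.mul_sum]
      exact Finset.sum_congr rfl fun i _ => mul_smul_comm (a i) e (ee i)
    have hw2 : e * (f - e) * (f - e) = ∑ i, (a i * a i) • (e * ee i) := by
      rw [hw1, hd, Finset.sum_mul]
      refine Finset.sum_congr rfl fun i _ => ?_
      rw [Finset.mul_sum, Finset.sum_eq_single i
        (fun j _ hji => by
          rw [smul_mul_assoc, mul_smul_comm, mul_assoc, ho i j (Ne.symm hji), mul_zero,
            smul_zero, smul_zero])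
        (fun hni => absurd (mem_univ i) hni)]
      rw [smul_mul_assoc, mul_smul_comm, mul_assoc, hi i, smul_smul]
    have hsum0 : ∑ i, (a i * a i + a i) • (e * ee i) = 0 := by
      have k2 := key0
      rw [hw2, hw1, ← Finset.sum_add_distrib] at k2
      simpa [add_smul] using k2
    have hterm : ∀ j, a j • (e * ee j) = 0 := by
      intro j
      have h6 : (∑ i, (a i * a i + a i) • (e * ee i)) * (e * ee j) = 0 := by
        rw [hsum0, zero_mul]
      rw [Finset.sum_mul, Finset.sum_eq_single j
        (fun i _ hij => by
          rw [smul_mul_assoc, mul_mul_mul_comm, ho i j hij, mul_zero, smul_zero])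
        (fun hnj => absurd (mem_univ j) hnj)] at h6
      have hidem : (e * ee j) * (e * ee j) = e * ee j := sp14_idem_mul he (hi j)
      rw [smul_mul_assoc, hidem] at h6
      rcases htf _ _ h6 with hc | hc
      · have ha0 : a j = 0 := by
          have hfac : a j * (a j + 1) = 0 := by linear_combination hc
          rcases mul_eq_zero.mp hfac with h' | h'
          · exact h'
          · exfalso; have := ha j; linarith
        rw [ha0, zero_smul]
      · rw [hc, smul_zero]
    have hzero2 : e * (f - e) = 0 := by
      rw [hw1]; exact Finset.sum_eq_zero fun i _ => hterm i
    linear_combination hzero2 + he'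
  · -- transitivity style axiom
    intro a b c d ha hb hc hd hab hbc hcd
    have h1 : a ≤ b := by
      rw [sp14_le_iff_sub hle, show b - a = (1 - a) * b by linear_combination hab]
      exact sp14_idem_nonneg hle (sp14_idem_mul ha.one_sub hb)
    have h2 : c ≤ d := by
      rw [sp14_le_iff_sub hle, show d - c = (1 - c) * d by linear_combination hcd]
      exact sp14_idem_nonneg hle (sp14_idem_mul hc.one_sub hd)
    exact hP3 a b c d h1 hbc h2
  · -- meets
    intro a b c ha hb hc hab hac
    have h8 := hP8 a b a c (sp14_idem_nonneg hle ha) (sp14_idem_nonneg hle hb)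
      (sp14_idem_nonneg hle ha) (sp14_idem_nonneg hle hc) hab hac
    have ha' : a * a = a := ha
    rwa [ha'] at h8
  · -- complements
    intro a b ha hb hab
    have h1 := hP5 a b hab
    have h2 := hP6 1 1 (-b) (-a) hr1 h1
    rwa [← sub_eq_add_neg, ← sub_eq_add_neg] at h2
  · -- interpolation
    intro e f he hf hef
    obtain ⟨s, hes, hsf⟩ := hP9 e f hef
    have hf1 : f ≤ 1 := by
      rw [sp14_le_iff_sub hle]; exact sp14_idem_nonneg hle hf.one_sub
    have h0e : 0 ≤ e := sp14_idem_nonneg hle he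
    have hes' : e ≤ s := hP2 _ _ hes
    have hsf' : s ≤ f := hP2 _ _ hsf
    have hs1 : s ≤ 1 := le_trans hsf' hf1
    have h0s : 0 ≤ s := le_trans h0e hes'
    have hu0 : 0 ≤ 1 - s := (sp14_le_iff_sub hle s 1).mp hs1
    have hu1 : 1 - s ≤ 1 := by
      rw [sp14_le_iff_sub hle, show (1 : S) - (1 - s) = s by ring]; exact h0s
    have hug : r (1 - s) (1 - e) := by
      have h1 := hP5 _ _ hes
      have h2 := hP6 1 1 (-s) (-e) hr1 h1
      rwa [← sub_eq_add_neg, ← sub_eq_add_neg] at h2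
    obtain ⟨h, hhi, huh, hhg, -⟩ := sp14_star_lemma hle htf hr hu0 hu1 he.one_sub hug
    refine ⟨1 - h, hhi.one_sub, ?_, ?_⟩
    · have h1 := hP5 _ _ hhg
      have h2 := hP6 1 1 (-(1 - e)) (-h) hr1 h1
      rwa [show (1 : S) + -(1 - e) = e by ring, show (1 : S) + -h = 1 - h by ring] at h2
    · have hc_le : 1 - h ≤ s := by
        rw [sp14_le_iff_sub hle] at huh ⊢
        rwa [show s - (1 - h) = h - (1 - s) by ring]
      exact hP3 _ s f f hc_le hsf le_rfl
  · -- below every nonzero idempotent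
    intro a ha ha0
    have h0a : 0 < a := lt_of_le_of_ne (sp14_idem_nonneg hle ha) (Ne.symm ha0)
    obtain ⟨t, ht0, hta⟩ := hP10 a h0a
    have hta' : t ≤ a := hP2 _ _ hta
    have ha1 : a ≤ 1 := by
      rw [sp14_le_iff_sub hle]; exact sp14_idem_nonneg hle ha.one_sub
    obtain ⟨h, hhi, -, hha, hne⟩ :=
      sp14_star_lemma hle htf hr ht0.le (le_trans hta' ha1) ha hta
    exact ⟨h, hhi, hne (ne_of_gt ht0), hha⟩
end

section
/- Let D be a totally ordered integral domain and (S, ◁) a proximity Specker D-algebra. Then for all s, t ∈ S: s ◁ t if and only if s^♭(b) ◁ t^♭(b) for all b ∈ D. -/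
open Finset

section Aux15
variable {D S : Type*} [CommRing D] [LinearOrder D] [IsStrictOrderedRing D] [CommRing S] [Algebra D S]

lemma aux_sum_orth_mul {n : ℕ} {e : Fin n → S} (he : ∀ i, IsIdempotentElem (e i))
    (ho : ∀ i j, i ≠ j → e i * e j = 0) (A : Finset (Fin n)) (i : Fin n) :
    (∑ j ∈ A, e j) * e i = if i ∈ A then e i else 0 := by
  rw [Finset.sum_mul]
  split_ifs with h
  · rw [Finset.sum_eq_single i (fun j _ hj => ho j i hj) (fun h' => absurd h h')]
    exact (he i).eq
  · exact Finset.sum_eq_zero fun j hj => ho j i (fun e => h (e ▸ hj))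

lemma aux_sum_orth_idem {n : ℕ} {e : Fin n → S} (he : ∀ i, IsIdempotentElem (e i))
    (ho : ∀ i j, i ≠ j → e i * e j = 0) (A : Finset (Fin n)) :
    IsIdempotentElem (∑ i ∈ A, e i) := by
  show _ * _ = _
  rw [Finset.mul_sum]
  refine Finset.sum_congr rfl fun i hiA => ?_
  rw [aux_sum_orth_mul he ho A i, if_pos hiA]

lemma aux_decomp_fintype {ι : Type*} [Fintype ι] (a : ι → D) (e : ι → S)
    (ha : ∀ i, 0 ≤ a i) (he : ∀ i, IsIdempotentElem (e i))
    (ho : ∀ i j, i ≠ j → e i * e j = 0) {v : S} (hv : v = ∑ i, a i • e i) :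
    OrthNonnegDecomp D S v := by
  obtain ⟨σ⟩ : Nonempty (ι ≃ Fin (Fintype.card ι)) := ⟨Fintype.equivFin ι⟩
  refine ⟨_, a ∘ σ.symm, e ∘ σ.symm, fun i => ha _, fun i => he _,
    fun i j hij => ho _ _ (fun h => hij (σ.symm.injective h)), ?_⟩
  rw [hv]
  exact Fintype.sum_equiv σ _ _ (fun i => by simp)

lemma aux_decomp_mul_idem {q v : S} (hq : IsIdempotentElem q)
    (hv : OrthNonnegDecomp D S v) : OrthNonnegDecomp D S (q * v) := by
  obtain ⟨n, a, e, ha, he, ho, rfl⟩ := hv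
  refine ⟨n, a, fun i => q * e i, ha, fun i => ?_, fun i j hij => ?_, ?_⟩
  · show (q * e i) * (q * e i) = q * e i
    rw [mul_mul_mul_comm, hq.eq, (he i).eq]
  · rw [mul_mul_mul_comm, ho i j hij, mul_zero]
  · rw [Finset.mul_sum]; exact Finset.sum_congr rfl fun i _ => (mul_smul_comm _ _ _)

lemma aux_decomp_add {v w : S} (hv : OrthNonnegDecomp D S v)
    (hw : OrthNonnegDecomp D S w) : OrthNonnegDecomp D S (v + w) := by
  obtain ⟨n, a, e, ha, he, ho, rfl⟩ := hv
  obtain ⟨m, b, f, hb, hf, hof, rfl⟩ := hw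
  set e' : Option (Fin n) → S := fun i => i.elim (1 - ∑ i, e i) e with he'
  set f' : Option (Fin m) → S := fun j => j.elim (1 - ∑ j, f j) f with hf'
  set a' : Option (Fin n) → D := fun i => i.elim 0 a with ha'
  set b' : Option (Fin m) → D := fun j => j.elim 0 b with hb'
  have hesum : IsIdempotentElem (∑ i, e i) := aux_sum_orth_idem he ho _
  have hfsum : IsIdempotentElem (∑ j, f j) := aux_sum_orth_idem hf hof _
  have he'i : ∀ i, IsIdempotentElem (e' i) := by
    rintro (_|i)
    · exact hesum.one_sub
    · exact he i
  have hf'j : ∀ j, IsIdempotentElem (f' j) := by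
    rintro (_|j)
    · exact hfsum.one_sub
    · exact hf j
  have he'o : ∀ i j, i ≠ j → e' i * e' j = 0 := by
    rintro (_|i) (_|j) hij
    · exact absurd rfl hij
    · show (1 - ∑ i, e i) * e j = 0
      rw [sub_mul, one_mul, aux_sum_orth_mul he ho _ j, if_pos (mem_univ j), sub_self]
    · show e i * (1 - ∑ i, e i) = 0
      rw [mul_sub, mul_one, mul_comm, aux_sum_orth_mul he ho _ i, if_pos (mem_univ i), sub_self]
    · exact ho i j (fun h => hij (by rw [h]))
  have hf'o : ∀ i j, i ≠ j → f' i * f' j = 0 := by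
    rintro (_|i) (_|j) hij
    · exact absurd rfl hij
    · show (1 - ∑ j, f j) * f j = 0
      rw [sub_mul, one_mul, aux_sum_orth_mul hf hof _ j, if_pos (mem_univ j), sub_self]
    · show f i * (1 - ∑ j, f j) = 0
      rw [mul_sub, mul_one, mul_comm, aux_sum_orth_mul hf hof _ i, if_pos (mem_univ i), sub_self]
    · exact hof i j (fun h => hij (by rw [h]))
  have he'sum : ∑ i, e' i = 1 := by
    rw [Fintype.sum_option]; show (1 - ∑ i, e i) + ∑ i, e i = 1; ring
  have hf'sum : ∑ j, f' j = 1 := by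
    rw [Fintype.sum_option]; show (1 - ∑ j, f j) + ∑ j, f j = 1; ring
  refine aux_decomp_fintype (ι := Option (Fin n) × Option (Fin m))
    (fun p => a' p.1 + b' p.2) (fun p => e' p.1 * f' p.2) ?_ ?_ ?_ ?_
  · rintro ⟨(_|i), (_|j)⟩ <;> simp only [ha', hb', Option.elim] <;>
      first
      | positivity
      | exact add_nonneg (le_refl 0) (hb _)
      | exact add_nonneg (ha _) (le_refl 0)
      | exact add_nonneg (ha _) (hb _)
  · intro p
    show (e' p.1 * f' p.2) * (e' p.1 * f' p.2) = e' p.1 * f' p.2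
    rw [mul_mul_mul_comm, (he'i p.1).eq, (hf'j p.2).eq]
  · rintro ⟨i1, j1⟩ ⟨i2, j2⟩ hij
    rcases eq_or_ne i1 i2 with rfl | hne
    · have hjne : j1 ≠ j2 := fun h => hij (by rw [h])
      rw [mul_mul_mul_comm, hf'o j1 j2 hjne, mul_zero]
    · rw [mul_mul_mul_comm, he'o i1 i2 hne, zero_mul]
  · have key : ∀ i : Option (Fin n), ∑ j : Option (Fin m), (a' i + b' j) • (e' i * f' j)
        = a' i • e' i + e' i * (∑ j, b' j • f' j) := by
      intro i
      have step : ∀ j : Option (Fin m), (a' i + b' j) • (e' i * f' j)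
          = a' i • (e' i * f' j) + e' i * (b' j • f' j) := by
        intro j; rw [add_smul, mul_smul_comm]
      rw [Finset.sum_congr rfl (fun j _ => step j), Finset.sum_add_distrib,
        ← Finset.smul_sum, ← Finset.mul_sum, hf'sum, mul_one, ← Finset.mul_sum]
    rw [Fintype.sum_prod_type, Finset.sum_congr rfl (fun i _ => key i),
      Finset.sum_add_distrib, ← Finset.sum_mul, he'sum, one_mul,
      Fintype.sum_option, Fintype.sum_option]
    simp only [ha', hb', he', hf', Option.elim, zero_smul, zero_add]

lemma aux_level [Lattice S] (hle : ∀ s t : S, s ≤ t ↔ OrthNonnegDecomp D S (t - s))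
    {n : ℕ} {cs : Fin n → D} {Es : Fin n → S} {s : S}
    (he : ∀ i, IsIdempotentElem (Es i)) (ho : ∀ i j, i ≠ j → Es i * Es j = 0)
    (hsum : ∑ i, Es i = 1) (hs : s = ∑ i, cs i • Es i)
    {b c : D} (hcb : c < b) (hmax : ∀ i, cs i < b → cs i ≤ c) :
    ((s - c • (1:S)) ⊔ 0) ⊓ ((b - c) • (1:S))
      = (b - c) • ∑ i ∈ Finset.univ.filter (fun i => b ≤ cs i), Es i := by
  classical
  set q : S := ∑ i ∈ Finset.univ.filter (fun i => b ≤ cs i), Es i with hqdef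
  have hq : IsIdempotentElem q := aux_sum_orth_idem he ho _
  set x : S := s - c • (1:S) with hxdef
  have hx : x = ∑ i, (cs i - c) • Es i := by
    rw [hxdef, hs, ← hsum, Finset.smul_sum, ← Finset.sum_sub_distrib]
    exact Finset.sum_congr rfl fun i _ => (sub_smul _ _ _).symm
  set Y : S := ∑ i, (if b ≤ cs i then cs i - c else 0) • Es i with hYdef
  have hqEs : ∀ i, q * Es i = if b ≤ cs i then Es i else 0 := by
    intro i
    rw [hqdef, aux_sum_orth_mul he ho _ i]
    simp
  have hqx : q * x = Y := by
    rw [hx, Finset.mul_sum, hYdef]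
    refine Finset.sum_congr rfl fun i _ => ?_
    rw [mul_smul_comm, hqEs i]
    split_ifs with h
    · rfl
    · rw [smul_zero, zero_smul]
  have hqY : q * Y = Y := by
    rw [hYdef, Finset.mul_sum]
    refine Finset.sum_congr rfl fun i _ => ?_
    rw [mul_smul_comm, hqEs i]
    split_ifs with h
    · rfl
    · rw [smul_zero, zero_smul]
  have hq1 : q * ((b - c) • (1:S)) = (b - c) • q := by rw [mul_smul_comm, mul_one]
  have hxY : x ≤ Y := by
    refine (hle _ _).2 (aux_decomp_fintype
      (fun i => (if b ≤ cs i then cs i - c else 0) - (cs i - c)) Es ?_ he ho ?_)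
    · intro i
      split_ifs with h
      · simp
      · have := hmax i (lt_of_not_ge h); simp; linarith
    · rw [hYdef, hx, ← Finset.sum_sub_distrib]
      exact Finset.sum_congr rfl fun i _ => (sub_smul _ _ _).symm
  have h0Y : (0:S) ≤ Y := by
    refine (hle _ _).2 (aux_decomp_fintype
      (fun i => if b ≤ cs i then cs i - c else 0) Es ?_ he ho ?_)
    · intro i; split_ifs with h
      · linarith
      · exact le_refl 0
    · rw [sub_zero]
  have hYub : ∀ u, x ≤ u → (0:S) ≤ u → Y ≤ u := by
    intro u hxu h0u
    have d1 : OrthNonnegDecomp D S (q * (u - x)) :=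
      aux_decomp_mul_idem hq ((hle x u).1 hxu)
    have d2 : OrthNonnegDecomp D S ((1 - q) * u) := by
      refine aux_decomp_mul_idem hq.one_sub ?_
      have := (hle 0 u).1 h0u; rwa [sub_zero] at this
    refine (hle Y u).2 ?_
    have hiden : u - Y = q * (u - x) + (1 - q) * u := by
      rw [mul_sub, sub_mul, one_mul, ← hqx]; ring
    rw [hiden]; exact aux_decomp_add d1 d2
  have hsup : x ⊔ 0 = Y :=
    le_antisymm (sup_le hxY h0Y) (hYub (x ⊔ 0) le_sup_left le_sup_right)
  set Z : S := (b - c) • q with hZdef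
  have hZeq : Z = ∑ i, (if b ≤ cs i then b - c else 0) • Es i := by
    rw [hZdef, hqdef, Finset.smul_sum, Finset.sum_filter]
    refine Finset.sum_congr rfl fun i _ => ?_
    split_ifs with h
    · rfl
    · simp
  have hZY : Z ≤ Y := by
    refine (hle _ _).2 (aux_decomp_fintype
      (fun i => (if b ≤ cs i then cs i - c else 0) - (if b ≤ cs i then b - c else 0))
      Es ?_ he ho ?_)
    · intro i; split_ifs with h
      · simp; linarith
      · simp
    · rw [hYdef, hZeq, ← Finset.sum_sub_distrib]
      exact Finset.sum_congr rfl fun i _ => (sub_smul _ _ _).symm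
  have hZd : Z ≤ (b - c) • (1:S) := by
    refine (hle _ _).2 (aux_decomp_fintype
      (fun i => (b - c) - (if b ≤ cs i then b - c else 0)) Es ?_ he ho ?_)
    · intro i; split_ifs with h
      · simp
      · simp; linarith
    · rw [← hsum, Finset.smul_sum, hZeq, ← Finset.sum_sub_distrib]
      exact Finset.sum_congr rfl fun i _ => (sub_smul _ _ _).symm
  have hZlb : ∀ u, u ≤ Y → u ≤ (b - c) • (1:S) → u ≤ Z := by
    intro u huY hud
    have d1 : OrthNonnegDecomp D S (q * ((b - c) • (1:S) - u)) :=
      aux_decomp_mul_idem hq ((hle _ _).1 hud)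
    have d2 : OrthNonnegDecomp D S ((1 - q) * (Y - u)) :=
      aux_decomp_mul_idem hq.one_sub ((hle _ _).1 huY)
    refine (hle u Z).2 ?_
    have hiden : Z - u = q * ((b - c) • (1:S) - u) + (1 - q) * (Y - u) := by
      rw [mul_sub, sub_mul, one_mul, mul_sub, hq1, hqY, hZdef]; ring
    rw [hiden]; exact aux_decomp_add d1 d2
  have hinf : Y ⊓ ((b - c) • (1:S)) = Z :=
    le_antisymm (hZlb _ inf_le_left inf_le_right) (le_inf hZY hZd)
  rw [hsup, hinf]

lemma aux_layercake {n : ℕ} (cs : Fin n → D) (Es : Fin n → S) (s : S)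
    (hsum : ∑ i, Es i = 1) (hs : s = ∑ i, cs i • Es i)
    (K : ℕ) (g : ℕ → D)
    (hJ : ∀ i, ∃ J, J ≤ K - 1 ∧ g J = cs i ∧
      ∀ j, j < K - 1 → (g (j+1) ≤ cs i ↔ j + 1 ≤ J)) :
    s = g 0 • 1 + ∑ j ∈ Finset.range (K - 1), (g (j+1) - g j) •
        (∑ i ∈ Finset.univ.filter (fun i => g (j+1) ≤ cs i), Es i) := by
  classical
  have main : ∀ i : Fin n, g 0 • Es i + ∑ j ∈ Finset.range (K-1),
      (if g (j+1) ≤ cs i then g (j+1) - g j else 0) • Es i = cs i • Es i := by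
    intro i
    obtain ⟨J, hJle, hJeq, hiff⟩ := hJ i
    have hfil : (Finset.range (K-1)).filter (fun j => g (j+1) ≤ cs i)
        = Finset.range J := by
      ext j
      simp only [Finset.mem_filter, Finset.mem_range]
      constructor
      · rintro ⟨hj, hg⟩; have := (hiff j hj).1 hg; omega
      · intro hj
        have hjK : j < K - 1 := by omega
        exact ⟨hjK, (hiff j hjK).2 (by omega)⟩
    have hco : g 0 + ∑ j ∈ Finset.range (K-1),
        (if g (j+1) ≤ cs i then g (j+1) - g j else 0) = cs i := by
      rw [← Finset.sum_filter, hfil, Finset.sum_range_sub, ← hJeq]; ring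
    rw [← Finset.sum_smul, ← add_smul, hco]
  calc s = ∑ i, cs i • Es i := hs
  _ = ∑ i : Fin n, (g 0 • Es i + ∑ j ∈ Finset.range (K-1),
        (if g (j+1) ≤ cs i then g (j+1) - g j else 0) • Es i) :=
      Finset.sum_congr rfl fun i _ => (main i).symm
  _ = (∑ i, g 0 • Es i) + ∑ i : Fin n, ∑ j ∈ Finset.range (K-1),
        (if g (j+1) ≤ cs i then g (j+1) - g j else 0) • Es i :=
      Finset.sum_add_distrib
  _ = g 0 • 1 + ∑ j ∈ Finset.range (K-1), ∑ i : Fin n,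
        (if g (j+1) ≤ cs i then g (j+1) - g j else 0) • Es i := by
      rw [← Finset.smul_sum, hsum, Finset.sum_comm]
  _ = g 0 • 1 + ∑ j ∈ Finset.range (K - 1), (g (j+1) - g j) •
        (∑ i ∈ Finset.univ.filter (fun i => g (j+1) ≤ cs i), Es i) := by
      refine congrArg _ (Finset.sum_congr rfl fun j hj => ?_)
      rw [Finset.smul_sum, Finset.sum_filter]
      exact Finset.sum_congr rfl fun i _ => by split_ifs with h <;> simp

end Aux15

/-- `s ◁ t` iff `s♭(b) ◁ t♭(b)` for all `b ∈ D`, where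
`s♭(b) = ⋁{s⊥(c) : c ≥ b}` is the sum of the idempotents of the full orthogonal
decomposition of `s` whose coefficients are `≥ b`. -/
theorem statement15 (D S : Type*) [CommRing D] [LinearOrder D] [IsStrictOrderedRing D] [CommRing S] [Algebra D S]
    (hS : IsSpecker D S) [Lattice S]
    (hle : ∀ s t : S, s ≤ t ↔ OrthNonnegDecomp D S (t - s))
    (r : S → S → Prop) (hr : IsProximity D S r)
    (s t : S) {ns nt : ℕ} (cs : Fin ns → D) (Es : Fin ns → S)
    (ct : Fin nt → D) (Et : Fin nt → S)
    (hds : FullOrthDecomp D S cs Es s) (hdt : FullOrthDecomp D S ct Et t) :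
    r s t ↔ ∀ b : D,
      r (∑ i ∈ Finset.univ.filter (fun i => b ≤ cs i), Es i)
        (∑ i ∈ Finset.univ.filter (fun i => b ≤ ct i), Et i) := by
  obtain ⟨⟨hr00, hr11⟩, hP2, hP3, hP4, hP5, hP6, hP7, hP8, hP9, hP10, hP11⟩ := hr
  obtain ⟨hinjs, hes, hnes, hos, hsums, heqs⟩ := hds
  obtain ⟨hinjt, het, hnet, hot, hsumt, heqt⟩ := hdt
  -- derived proximity rules
  have rconst : ∀ a : D, r (a • (1:S)) (a • (1:S)) := by
    intro a
    rcases lt_trichotomy a 0 with h | h | h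
    · have := hP7 (-1) (-1) (-a) (by linarith) (hP5 1 1 hr11)
      rwa [smul_neg, neg_smul, neg_neg] at this
    · subst h; simpa using hr00
    · exact hP7 1 1 a h hr11
  have rmeet : ∀ {s' t' u v : S}, r s' t' → r u v → r (s' ⊓ u) (t' ⊓ v) := by
    intro s' t' u v h1 h2
    exact hP4 _ _ _ (hP3 _ _ _ _ inf_le_left h1 le_rfl)
      (hP3 _ _ _ _ inf_le_right h2 le_rfl)
  have negle : ∀ x y : S, x ≤ y → -y ≤ -x := by
    intro x y h
    refine (hle _ _).2 ?_
    rw [show -x - -y = y - x by ring]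
    exact (hle x y).1 h
  have nsup : ∀ x y : S, -((-x) ⊓ (-y)) = x ⊔ y := by
    intro x y
    refine le_antisymm ?_ ?_
    · have h : -(x ⊔ y) ≤ (-x) ⊓ (-y) :=
        le_inf (negle _ _ le_sup_left) (negle _ _ le_sup_right)
      have h2 := negle _ _ h
      rwa [neg_neg] at h2
    · refine sup_le ?_ ?_
      · have h2 := negle _ _ (inf_le_left (a := -x) (b := -y))
        rwa [neg_neg] at h2
      · have h2 := negle _ _ (inf_le_right (a := -x) (b := -y))
        rwa [neg_neg] at h2
  have rjoin : ∀ {s' t' u v : S}, r s' t' → r u v → r (s' ⊔ u) (t' ⊔ v) := by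
    intro s' t' u v h1 h2
    have h4 := hP5 _ _ (rmeet (hP5 _ _ h1) (hP5 _ _ h2))
    rwa [nsup, nsup] at h4
  have rsum : ∀ (A : Finset ℕ) (f g : ℕ → S),
      (∀ j ∈ A, r (f j) (g j)) → r (∑ j ∈ A, f j) (∑ j ∈ A, g j) := by
    intro A
    induction A using Finset.cons_induction with
    | empty => intro f g h; simpa using hr00
    | cons a A ha ih =>
      intro f g h
      rw [Finset.sum_cons, Finset.sum_cons]
      exact hP6 _ _ _ _ (h a (Finset.mem_cons_self a A))
        (ih f g fun j hj => h j (Finset.mem_cons.2 (Or.inr hj)))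
  constructor
  · -- forward direction
    intro hst b
    set T : Finset D := (Finset.univ.image cs) ∪ (Finset.univ.image ct) with hT
    by_cases hall : ∀ x ∈ T, b ≤ x
    · have hcs : ∀ i, b ≤ cs i := fun i => hall _
        (Finset.mem_union_left _ (Finset.mem_image_of_mem cs (Finset.mem_univ i)))
      have hct : ∀ i, b ≤ ct i := fun i => hall _
        (Finset.mem_union_right _ (Finset.mem_image_of_mem ct (Finset.mem_univ i)))
      have e1 : Finset.univ.filter (fun i => b ≤ cs i) = Finset.univ :=
        Finset.filter_true_of_mem (fun i _ => hcs i)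
      have e2 : Finset.univ.filter (fun i => b ≤ ct i) = Finset.univ :=
        Finset.filter_true_of_mem (fun i _ => hct i)
      rw [e1, e2, hsums, hsumt]
      exact hr11
    · push_neg at hall
      obtain ⟨x0, hx0T, hx0b⟩ := hall
      have hne : (T.filter (· < b)).Nonempty := ⟨x0, Finset.mem_filter.2 ⟨hx0T, hx0b⟩⟩
      set c := (T.filter (· < b)).max' hne with hc
      have hcb : c < b := (Finset.mem_filter.1 ((T.filter (· < b)).max'_mem hne)).2
      have hmaxs : ∀ i, cs i < b → cs i ≤ c := by
        intro i hi
        refine Finset.le_max' _ (cs i) ?_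
        simp only [Finset.mem_filter]
        exact ⟨Finset.mem_union_left _ (Finset.mem_image_of_mem cs (Finset.mem_univ i)), hi⟩
      have hmaxt : ∀ i, ct i < b → ct i ≤ c := by
        intro i hi
        refine Finset.le_max' _ (ct i) ?_
        simp only [Finset.mem_filter]
        exact ⟨Finset.mem_union_right _ (Finset.mem_image_of_mem ct (Finset.mem_univ i)), hi⟩
      have lev_s := aux_level hle hes hos hsums heqs hcb hmaxs
      have lev_t := aux_level hle het hot hsumt heqt hcb hmaxt
      have h1 : r (s - c • (1:S)) (t - c • (1:S)) := by
        have := hP6 _ _ _ _ hst (rconst (-c))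
        rwa [neg_smul, ← sub_eq_add_neg, ← sub_eq_add_neg] at this
      have h2 : r ((s - c • (1:S)) ⊔ 0) ((t - c • (1:S)) ⊔ 0) := rjoin h1 hr00
      have h3 := rmeet h2 (rconst (b - c))
      rw [lev_s, lev_t] at h3
      exact hP8 _ _ ⟨b - c, by linarith, h3⟩
  · -- backward direction
    intro H
    by_cases hn : ns = 0
    · subst hn
      have h01 : (0:S) = 1 := by simpa using hsums
      have hall0 : ∀ x : S, x = 0 := fun x => by rw [← mul_one x, ← h01, mul_zero]
      rw [hall0 s, hall0 t]
      exact hr00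
    · set T : Finset D := (Finset.univ.image cs) ∪ (Finset.univ.image ct) with hT
      have hTne : T.Nonempty :=
        ⟨cs ⟨0, Nat.pos_of_ne_zero hn⟩, Finset.mem_union_left _
          (Finset.mem_image_of_mem _ (Finset.mem_univ _))⟩
      set K := T.card with hK
      have hKpos : 0 < K := Finset.card_pos.2 hTne
      set σ := T.orderIsoOfFin rfl with hσ
      set g : ℕ → D := fun j => (σ ⟨min j (K-1), by omega⟩ : D) with hg
      have hgj : ∀ jf : Fin K, g (jf : ℕ) = ((σ jf : T) : D) := by
        intro jf
        have hmk : (⟨min (jf : ℕ) (K-1), by omega⟩ : Fin K) = jf :=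
          Fin.ext (by have := jf.isLt; show min (jf : ℕ) (K-1) = (jf : ℕ); omega)
        simp only [hg]
        exact congrArg (fun z => ((σ z : T) : D)) hmk
      have hJgen : ∀ d, d ∈ T → ∃ J, J ≤ K - 1 ∧ g J = d ∧
          ∀ j, j < K - 1 → (g (j+1) ≤ d ↔ j + 1 ≤ J) := by
        intro d hd
        have hJlt : ((σ.symm ⟨d, hd⟩ : Fin K) : ℕ) < K := (σ.symm ⟨d, hd⟩).isLt
        refine ⟨((σ.symm ⟨d, hd⟩ : Fin K) : ℕ), by omega, ?_, ?_⟩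
        · rw [hgj (σ.symm ⟨d, hd⟩), OrderIso.apply_symm_apply]
        · intro j hj
          have hfin : g (j+1) = ((σ ⟨j+1, by omega⟩ : T) : D) := hgj ⟨j+1, by omega⟩
          rw [hfin]
          constructor
          · intro h
            have h1 : (σ ⟨j+1, by omega⟩ : { x // x ∈ T }) ≤ ⟨d, hd⟩ := h
            have h2 : (⟨j+1, by omega⟩ : Fin K) ≤ σ.symm ⟨d, hd⟩ :=
              σ.le_symm_apply.2 h1
            exact h2
          · intro h
            have h2 : (⟨j+1, by omega⟩ : Fin K) ≤ σ.symm ⟨d, hd⟩ := h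
            have h1 : (σ ⟨j+1, by omega⟩ : { x // x ∈ T }) ≤ ⟨d, hd⟩ :=
              σ.le_symm_apply.1 h2
            exact h1
      have hJs : ∀ i, ∃ J, J ≤ K - 1 ∧ g J = cs i ∧
          ∀ j, j < K - 1 → (g (j+1) ≤ cs i ↔ j + 1 ≤ J) := fun i =>
        hJgen (cs i) (Finset.mem_union_left _ (Finset.mem_image_of_mem cs (Finset.mem_univ i)))
      have hJt : ∀ i, ∃ J, J ≤ K - 1 ∧ g J = ct i ∧
          ∀ j, j < K - 1 → (g (j+1) ≤ ct i ↔ j + 1 ≤ J) := fun i =>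
        hJgen (ct i) (Finset.mem_union_right _ (Finset.mem_image_of_mem ct (Finset.mem_univ i)))
      have lcs := aux_layercake cs Es s hsums heqs K g hJs
      have lct := aux_layercake ct Et t hsumt heqt K g hJt
      rw [lcs, lct]
      refine hP6 _ _ _ _ (rconst (g 0)) (rsum (Finset.range (K-1)) _ _ fun j hj => ?_)
      have hjlt : j < K - 1 := Finset.mem_range.1 hj
      have hlt : g j < g (j+1) := by
        have e1 : g j = ((σ ⟨j, by omega⟩ : T) : D) := hgj ⟨j, by omega⟩
        have e2 : g (j+1) = ((σ ⟨j+1, by omega⟩ : T) : D) := hgj ⟨j+1, by omega⟩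
        rw [e1, e2]
        exact Subtype.coe_lt_coe.2 (σ.lt_iff_lt.2 (Fin.mk_lt_mk.2 (by omega)))
      exact hP7 _ _ _ (by linarith) (H (g (j+1)))
end
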